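/- arXiv:2210.02002 — 2 statements merged into one kernel-verified Lean document; each statement's English description precedes it below -/
import Mathlib

section
/- Let N₁, N₂ ∈ ℕ with N₁, N₂ ≥ 2 and δ > 0. Then for any set of points {(x_i, y_i)}_{i=0}^{N₁N₂−1} with x_i ≥ x_{i−1} + δ for all i and x_i, y_i ∈ [0,1], there exists a 3-hidden-layer ReLU network g† with layer widths (1, 2N₁−1, 4(N₂−2)+2, 8(N₂−2)+2, 1) and all weights bounded in absolute value by 4/δ², such that: (1) g†(x_i) = y_i for all i ∈ {0,…,N₁N₂−1}; (2) g† is linear on [x_{i−1}, x_i] whenever i ∉ {jN₂ : j = 1,…,N₁−1}. Moreover, the weights of the first and last affine layers are all bounded in absolute value by 1. -/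
open MeasureTheory ProbabilityTheory
open scoped ENNReal BigOperators

noncomputable section

/-- Euclidean (ℓ²) norm on `Fin d → ℝ`. -/
def euclNorm {d : ℕ} (x : Fin d → ℝ) : ℝ := Real.sqrt (∑ i, (x i) ^ 2)

/-- ReLU activation applied entrywise. -/
def reluVec {d : ℕ} (v : Fin d → ℝ) : Fin d → ℝ := fun i => max (v i) 0

/-- Truncation operator `T_M` at level `M` (identity when `M = ∞`). -/
def trunc (M : ℝ≥0∞) (z : ℝ) : ℝ :=
  if M = ⊤ then z else Real.sign z * min |z| M.toReal

/-- Entrywise truncation. -/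
def truncVec {d : ℕ} (M : ℝ≥0∞) (v : Fin d → ℝ) : Fin d → ℝ := fun i => trunc M (v i)

/-- An affine layer of a neural network. -/
structure Layer (din dout : ℕ) where
  W : Matrix (Fin dout) (Fin din) ℝ
  b : Fin dout → ℝ

/-- The affine map computed by a layer. -/
def Layer.apply {din dout : ℕ} (A : Layer din dout) (x : Fin din → ℝ) : Fin dout → ℝ :=
  fun i => (∑ j, A.W i j * x j) + A.b i

/-- All entries of the layer are bounded by `B` (in `ℝ≥0∞`; `B = ∞` means no constraint). -/
def Layer.Bounded {din dout : ℕ} (A : Layer din dout) (B : ℝ≥0∞) : Prop :=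
  (∀ i j, (‖A.W i j‖₊ : ℝ≥0∞) ≤ B) ∧ ∀ i, (‖A.b i‖₊ : ℝ≥0∞) ≤ B

/-- Apply `k` hidden layers, each an affine map followed by the entrywise ReLU. -/
def stack {N : ℕ} : (k : ℕ) → (Fin k → Layer N N) → (Fin N → ℝ) → (Fin N → ℝ)
  | 0, _, x => x
  | k + 1, As, x => stack k (fun i => As i.succ) (reluVec ((As 0).apply x))

/-- The function computed by a deep ReLU network with input layer `A0`, hidden layers `Amid`,
output layer `Aout`, with outputs truncated at level `M`. -/
def netFun {din dout N k : ℕ} (M : ℝ≥0∞)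
    (A0 : Layer din N) (Amid : Fin k → Layer N N) (Aout : Layer N dout)
    (x : Fin din → ℝ) : Fin dout → ℝ :=
  truncVec M (Aout.apply (stack k Amid (reluVec (A0.apply x))))

/-- The deep ReLU network class `𝒢(L, din, dout, N, M, B)`:
depth (number of hidden layers) `L`, hidden width `N`, outputs truncated at `M`,
all weights bounded by `B`. -/
def ReluNets (L din dout N : ℕ) (M B : ℝ≥0∞) :
    Set ((Fin din → ℝ) → (Fin dout → ℝ)) :=
  { f | ∃ (A0 : Layer din N) (Amid : Fin (L - 1) → Layer N N) (Aout : Layer N dout),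
      A0.Bounded B ∧ (∀ i, (Amid i).Bounded B) ∧ Aout.Bounded B ∧
      f = netFun M A0 Amid Aout }

/-- Scalar-output deep ReLU networks `𝒢(L, din, 1, N, M, B)`. -/
def ReluNets1 (L din N : ℕ) (M B : ℝ≥0∞) : Set ((Fin din → ℝ) → ℝ) :=
  { f | ∃ g ∈ ReluNets L din 1 N M B, ∀ x, f x = g x 0 }

/-- `(β, C)`-smooth `d`-variate function: writing `β = q + s` with `q ∈ ℕ`, `s ∈ (0,1]`,
all partial derivatives up to order `q` exist and the order-`q` derivative is
`s`-Hölder with constant `C` (w.r.t. the Euclidean norm). -/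
def HolderSmooth (d : ℕ) (β C : ℝ) (f : (Fin d → ℝ) → ℝ) : Prop :=
  ∃ (q : ℕ) (s : ℝ), 0 < s ∧ s ≤ 1 ∧ β = (q : ℝ) + s ∧
    ContDiff ℝ (q : ℕ∞) f ∧
    ∀ x z : Fin d → ℝ,
      ‖iteratedFDeriv ℝ q f x - iteratedFDeriv ℝ q f z‖ ≤ C * euclNorm (x - z) ^ s

/-- Hierarchical composition model: `HCM C P d l` is the class `H(d, l+1, 𝒫)`
(the index is shifted so that `HCM C P d 0` is the base level `H(d, 1, 𝒫)`). -/
def HCM (C : ℝ) (P : Set (ℝ × ℕ)) (d : ℕ) : ℕ → Set ((Fin d → ℝ) → ℝ)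
  | 0 =>
    { h | ∃ (β : ℝ) (t : ℕ), (β, t) ∈ P ∧
        ∃ (g : (Fin t → ℝ) → ℝ) (π : Fin t → Fin d),
          HolderSmooth t β C g ∧ ∀ x, h x = g fun i => x (π i) }
  | l + 1 =>
    { h | ∃ (β : ℝ) (t : ℕ), (β, t) ∈ P ∧
        ∃ (g : (Fin t → ℝ) → ℝ) (F : Fin t → (Fin d → ℝ) → ℝ),
          HolderSmooth t β C g ∧ (∀ i, F i ∈ HCM C P d l) ∧
          ∀ x, h x = g fun i => F i x }

/-- Frobenius norm of a matrix. -/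
def frobNorm {m n : ℕ} (A : Matrix (Fin m) (Fin n) ℝ) : ℝ :=
  Real.sqrt (∑ i, ∑ j, (A i j) ^ 2)

/-- Smallest singular value. -/
def nuMin {m n : ℕ} (A : Matrix (Fin m) (Fin n) ℝ) : ℝ :=
  sInf {c | ∃ x : Fin n → ℝ, euclNorm x = 1 ∧ c = euclNorm (A.mulVec x)}

/-- Largest singular value. -/
def nuMax {m n : ℕ} (A : Matrix (Fin m) (Fin n) ℝ) : ℝ :=
  sSup {c | ∃ x : Fin n → ℝ, euclNorm x = 1 ∧ c = euclNorm (A.mulVec x)}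

/-- Smallest eigenvalue (Rayleigh quotient) of a symmetric matrix. -/
def lamMin {n : ℕ} (A : Matrix (Fin n) (Fin n) ℝ) : ℝ :=
  sInf {c | ∃ x : Fin n → ℝ, euclNorm x = 1 ∧ c = ∑ i, x i * A.mulVec x i}

/-- Largest eigenvalue (Rayleigh quotient) of a symmetric matrix. -/
def lamMax {n : ℕ} (A : Matrix (Fin n) (Fin n) ℝ) : ℝ :=
  sSup {c | ∃ x : Fin n → ℝ, euclNorm x = 1 ∧ c = ∑ i, x i * A.mulVec x i}

/-- The clipped-`L₁` function `ψ_τ`. -/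
def clipL1 (τ z : ℝ) : ℝ := min (|z| / τ) 1

end


namespace S18

open Finset

lemma sum_pair (E : ℕ) (h : ℕ → ℝ) :
    ∑ m ∈ Finset.range (2*E), h m = ∑ k ∈ Finset.range E, (h (2*k) + h (2*k+1)) := by
  induction E with
  | zero => simp
  | succ n ih =>
    have h2 : 2*(n+1) = (2*n+1)+1 := by ring
    rw [h2, Finset.sum_range_succ, Finset.sum_range_succ, ih, Finset.sum_range_succ, add_assoc]

lemma fin_sum_single {n : ℕ} (a : ℕ) (ha : a < n) (c : ℝ) (f : Fin n → ℝ) :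
    (∑ m : Fin n, (if (m : ℕ) = a then c else 0) * f m) = c * f ⟨a, ha⟩ := by
  rw [Finset.sum_eq_single (⟨a, ha⟩ : Fin n)]
  · simp
  · intro b _ hb
    have hne : (b : ℕ) ≠ a := fun h => hb (Fin.ext h)
    simp [hne]
  · intro h; exact absurd (Finset.mem_univ _) h

noncomputable def slp (q v : ℕ → ℝ) (m : ℕ) : ℝ := (v (m+1) - v m) / (q (m+1) - q m)

noncomputable def plc (q v : ℕ → ℝ) (m : ℕ) : ℝ :=
  slp q v m - (if m = 0 then 0 else slp q v (m-1))

lemma plc_zero_fun (q : ℕ → ℝ) (m : ℕ) : plc q (fun _ => 0) m = 0 := by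
  simp [plc, slp]

lemma lin_eval (q v : ℕ → ℝ) :
    ∀ r, (∀ m, m < r → q m < q (m+1)) → ∀ z : ℝ,
      v 0 + ∑ m ∈ Finset.range (r+1), plc q v m * (z - q m)
        = v r + slp q v r * (z - q r) := by
  intro r
  induction r with
  | zero => intro _ z; simp [plc]
  | succ n ih =>
    intro hq z
    rw [Finset.sum_range_succ, ← add_assoc, ih (fun m hm => hq m (Nat.lt_succ_of_lt hm)) z]
    have hqn : q n < q (n+1) := hq n (Nat.lt_succ_self n)
    have hne : q (n+1) - q n ≠ 0 := by intro h; nlinarith [h]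
    have hv : v n + slp q v n * (q (n+1) - q n) = v (n+1) := by
      rw [slp, div_mul_cancel₀ _ hne]; ring
    have hplc : plc q v (n+1) = slp q v (n+1) - slp q v n := by simp [plc]
    rw [hplc]
    nlinarith [hv]

lemma q_mono (q : ℕ → ℝ) (U : ℕ) (hq : ∀ m, m + 1 ≤ U → q m < q (m+1)) :
    ∀ a b, a ≤ b → b ≤ U → q a ≤ q b := by
  intro a b hab hbU
  rcases Nat.exists_eq_add_of_le hab with ⟨k, rfl⟩
  clear hab
  induction k with
  | zero => simp
  | succ n ih =>
    have h1 : q a ≤ q (a + n) := ih (by omega)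
    have h2 : q (a+n) < q (a+n+1) := hq _ (by omega)
    have h3 : a + (n+1) = (a+n)+1 := by ring
    rw [h3]; linarith

lemma pl_eval (q v : ℕ → ℝ) (U r : ℕ) (hq : ∀ m, m + 1 ≤ U → q m < q (m+1))
    (hrU : r + 1 ≤ U) (z : ℝ) (hz1 : q r ≤ z) (hz2 : z ≤ q (r+1)) :
    v 0 + ∑ m ∈ Finset.range U, plc q v m * max (z - q m) 0
      = v r + slp q v r * (z - q r) := by
  have key : ∑ m ∈ Finset.range U, plc q v m * max (z - q m) 0
      = ∑ m ∈ Finset.range (r+1), plc q v m * (z - q m) := by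
    rw [Finset.range_eq_Ico, ← Finset.sum_Ico_consecutive _ (Nat.zero_le (r+1)) hrU]
    have h2 : ∑ m ∈ Finset.Ico (r+1) U, plc q v m * max (z - q m) 0 = 0 := by
      apply Finset.sum_eq_zero
      intro m hm
      simp only [Finset.mem_Ico] at hm
      have : q (r+1) ≤ q m := q_mono q U hq (r+1) m hm.1 (le_of_lt hm.2)
      rw [max_eq_right (by linarith), mul_zero]
    have h1 : ∑ m ∈ Finset.Ico 0 (r+1), plc q v m * max (z - q m) 0
        = ∑ m ∈ Finset.range (r+1), plc q v m * (z - q m) := by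
      rw [← Finset.range_eq_Ico]
      apply Finset.sum_congr rfl
      intro m hm
      simp only [Finset.mem_range] at hm
      have : q m ≤ q r := q_mono q U hq m r (by omega) (by omega)
      rw [max_eq_left (by linarith)]
    rw [h2, h1, add_zero, Finset.range_eq_Ico]
  rw [key]
  exact lin_eval q v r (fun m hm => hq m (by omega)) z

end S18
namespace S18

open Finset

/-- index of the `m`-th knot: boundary points of cells. -/
def kI (N₂ m : ℕ) : ℕ := (m/2)*N₂ + (m%2)*(N₂-1)

noncomputable def KK (N₂ : ℕ) (X : ℕ → ℝ) (m : ℕ) : ℝ := X (kI N₂ m)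

noncomputable def sLL (N₂ : ℕ) (X Y : ℕ → ℝ) (j : ℕ) : ℝ :=
  (Y (j*N₂+(N₂-1)) - Y (j*N₂)) / (X (j*N₂+(N₂-1)) - X (j*N₂))

noncomputable def Lv (N₂ : ℕ) (X Y : ℕ → ℝ) (i : ℕ) : ℝ :=
  Y ((i/N₂)*N₂) + sLL N₂ X Y (i/N₂) * (X i - X ((i/N₂)*N₂))

noncomputable def rho (N₂ : ℕ) (X Y : ℕ → ℝ) (i : ℕ) : ℝ := Y i - Lv N₂ X Y i

noncomputable def rhoE (N₂ : ℕ) (X Y : ℕ → ℝ) (ε : Bool) (i : ℕ) : ℝ :=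
  if ε then max (rho N₂ X Y i) 0 else max (-(rho N₂ X Y i)) 0

noncomputable def m1 (N₂ : ℕ) (X Y : ℕ → ℝ) (ε : Bool) (k j : ℕ) : ℝ :=
  rhoE N₂ X Y ε (j*N₂+k+1) / (X (j*N₂+k+1) - X (j*N₂+k))

noncomputable def m2 (N₂ : ℕ) (X Y : ℕ → ℝ) (ε : Bool) (k j : ℕ) : ℝ :=
  rhoE N₂ X Y ε (j*N₂+k+1) / (X (j*N₂+k+2) - X (j*N₂+k+1))

noncomputable def vLam (N₂ : ℕ) (X Y : ℕ → ℝ) (ε : Bool) (k m : ℕ) : ℝ :=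
  m1 N₂ X Y ε k (m/2) * (KK N₂ X m - X ((m/2)*N₂+k)) / 2

noncomputable def vGam (N₂ : ℕ) (X Y : ℕ → ℝ) (ε : Bool) (k m : ℕ) : ℝ :=
  (m1 N₂ X Y ε k (m/2) * (KK N₂ X m - X ((m/2)*N₂+k))
    - m2 N₂ X Y ε k (m/2) * (X ((m/2)*N₂+k+2) - KK N₂ X m)) / 4

noncomputable def F2 (N₂ : ℕ) (X Y : ℕ → ℝ) (i : ℕ) : ℕ → ℝ :=
  if i = 0 then (fun m => Y (kI N₂ m))
  else if (i-1)/4 < N₂ - 2 then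
    (if (i-1)%4 = 0 then vLam N₂ X Y true ((i-1)/4)
     else if (i-1)%4 = 1 then vGam N₂ X Y true ((i-1)/4)
     else if (i-1)%4 = 2 then vLam N₂ X Y false ((i-1)/4)
     else vGam N₂ X Y false ((i-1)/4))
  else (fun _ => 0)

noncomputable def P2 (N₁ N₂ : ℕ) (X Y : ℕ → ℝ) (i : ℕ) (z : ℝ) : ℝ :=
  F2 N₂ X Y i 0 + ∑ m ∈ Finset.range (2*N₁-1),
    plc (KK N₂ X) (F2 N₂ X Y i) m * max (z - KK N₂ X m) 0

noncomputable def O2 (N₁ N₂ : ℕ) (X Y : ℕ → ℝ) (i : ℕ) (z : ℝ) : ℝ :=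
  max (P2 N₁ N₂ X Y i z) 0

noncomputable def P3 (N₁ N₂ : ℕ) (X Y : ℕ → ℝ) (i : ℕ) (z : ℝ) : ℝ :=
  if i = 0 then O2 N₁ N₂ X Y 0 z
  else if (i-1)/2 < N₂-2 then
    2 * O2 N₁ N₂ X Y (4*((i-1)/2)+2*((i-1)%2)+1) z
      - 4 * O2 N₁ N₂ X Y (4*((i-1)/2)+2*((i-1)%2)+2) z
  else 0

noncomputable def O3 (N₁ N₂ : ℕ) (X Y : ℕ → ℝ) (i : ℕ) (z : ℝ) : ℝ :=
  max (P3 N₁ N₂ X Y i z) 0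

noncomputable def GD (N₁ N₂ : ℕ) (X Y : ℕ → ℝ) (z : ℝ) : ℝ :=
  O3 N₁ N₂ X Y 0 z + ∑ k ∈ Finset.range (N₂-2),
    (O3 N₁ N₂ X Y (2*k+1) z - O3 N₁ N₂ X Y (2*k+2) z)

def idxL (ε : Bool) (k : ℕ) : ℕ := 4*k + (if ε then 0 else 2) + 1
def idxG (ε : Bool) (k : ℕ) : ℕ := 4*k + (if ε then 0 else 2) + 2

lemma kI_even (N₂ j : ℕ) : kI N₂ (2*j) = j*N₂ := by
  have h1 : (2*j)/2 = j := by omega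
  have h2 : (2*j)%2 = 0 := by omega
  simp [kI, h1, h2]

lemma kI_odd (N₂ j : ℕ) : kI N₂ (2*j+1) = j*N₂ + (N₂-1) := by
  have h1 : (2*j+1)/2 = j := by omega
  have h2 : (2*j+1)%2 = 1 := by omega
  simp [kI, h1, h2]

lemma div_cell {N₂ : ℕ} (hN₂ : 0 < N₂) (j r : ℕ) (hr : r < N₂) : (j*N₂+r)/N₂ = j := by
  rw [add_comm, mul_comm, Nat.add_mul_div_left _ _ hN₂, Nat.div_eq_of_lt hr, zero_add]

lemma F2_zero (N₂ : ℕ) (X Y : ℕ → ℝ) : F2 N₂ X Y 0 = fun m => Y (kI N₂ m) := by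
  simp [F2]

lemma F2_idxL (N₂ : ℕ) (X Y : ℕ → ℝ) (ε : Bool) (k : ℕ) (hk : k < N₂ - 2) :
    F2 N₂ X Y (idxL ε k) = vLam N₂ X Y ε k := by
  cases ε
  · have h0 : idxL false k ≠ 0 := by simp [idxL]
    have h1 : (idxL false k - 1)/4 = k := by simp [idxL] <;> omega
    have h2 : (idxL false k - 1)%4 = 2 := by simp [idxL] <;> omega
    simp [F2, h0, h1, h2, hk]
  · have h0 : idxL true k ≠ 0 := by simp [idxL]
    have h1 : (idxL true k - 1)/4 = k := by simp [idxL] <;> omega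
    have h2 : (idxL true k - 1)%4 = 0 := by simp [idxL] <;> omega
    simp [F2, h0, h1, h2, hk]

lemma F2_idxG (N₂ : ℕ) (X Y : ℕ → ℝ) (ε : Bool) (k : ℕ) (hk : k < N₂ - 2) :
    F2 N₂ X Y (idxG ε k) = vGam N₂ X Y ε k := by
  cases ε
  · have h0 : idxG false k ≠ 0 := by simp [idxG]
    have h1 : (idxG false k - 1)/4 = k := by simp [idxG] <;> omega
    have h2 : (idxG false k - 1)%4 = 3 := by simp [idxG] <;> omega
    simp [F2, h0, h1, h2, hk]
  · have h0 : idxG true k ≠ 0 := by simp [idxG]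
    have h1 : (idxG true k - 1)/4 = k := by simp [idxG] <;> omega
    have h2 : (idxG true k - 1)%4 = 1 := by simp [idxG] <;> omega
    simp [F2, h0, h1, h2, hk]

end S18
namespace S18

open Finset

section Ctx
variable {N₁ N₂ : ℕ} {X Y : ℕ → ℝ} {δ : ℝ}

lemma Xgap (hδ : 0 < δ) (hmono : ∀ a b : ℕ, a ≤ b → X a ≤ X b)
    (hsep : ∀ n, n+1 < N₁*N₂ → X n + δ ≤ X (n+1)) :
    ∀ a b, a < b → b < N₁*N₂ → X a + δ ≤ X b := by
  intro a b hab hbN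
  have h1 := hsep a (by omega)
  have h2 := hmono (a+1) b (by omega)
  linarith

lemma Xlt (hδ : 0 < δ) (hmono : ∀ a b : ℕ, a ≤ b → X a ≤ X b)
    (hsep : ∀ n, n+1 < N₁*N₂ → X n + δ ≤ X (n+1)) :
    ∀ a b, a < b → b < N₁*N₂ → X a < X b := by
  intro a b hab hbN
  have := Xgap hδ hmono hsep a b hab hbN
  linarith

lemma kI_succ_lt (hN₂ : 2 ≤ N₂) (m : ℕ) : kI N₂ m < kI N₂ (m+1) := by
  obtain ⟨j, hj⟩ : ∃ j, m = 2*j ∨ m = 2*j+1 := ⟨m/2, by omega⟩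
  rcases hj with rfl | rfl
  · rw [kI_even, kI_odd]; omega
  · have h : 2*j+1+1 = 2*(j+1) := by ring
    rw [h, kI_odd, kI_even, Nat.succ_mul]; omega

lemma kI_mono (hN₂ : 2 ≤ N₂) : ∀ a b, a ≤ b → kI N₂ a ≤ kI N₂ b := by
  intro a b hab
  rcases Nat.exists_eq_add_of_le hab with ⟨c, rfl⟩
  clear hab
  induction c with
  | zero => simp
  | succ n ih =>
    have h1 := kI_succ_lt (N₂ := N₂) hN₂ (a + n)
    have h2 : a + (n+1) = (a+n)+1 := by omega
    rw [h2]
    omega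

lemma kI_lt_N (hN₁ : 2 ≤ N₁) (hN₂ : 2 ≤ N₂) (m : ℕ) (hm : m ≤ 2*N₁-1) :
    kI N₂ m < N₁*N₂ := by
  obtain ⟨j, hj⟩ : ∃ j, m = 2*j ∨ m = 2*j+1 := ⟨m/2, by omega⟩
  have hj1 : j + 1 ≤ N₁ := by omega
  have hmul : (j+1)*N₂ ≤ N₁*N₂ := Nat.mul_le_mul_right _ hj1
  have hsm : (j+1)*N₂ = j*N₂ + N₂ := by rw [Nat.succ_mul]
  rcases hj with rfl | rfl
  · rw [kI_even]; omega
  · rw [kI_odd]; omega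

lemma KK_mono (hN₂ : 2 ≤ N₂) (hmono : ∀ a b : ℕ, a ≤ b → X a ≤ X b) :
    ∀ a b, a ≤ b → KK N₂ X a ≤ KK N₂ X b := by
  intro a b hab
  exact hmono _ _ (kI_mono hN₂ a b hab)

lemma KK_lt (hN₁ : 2 ≤ N₁) (hN₂ : 2 ≤ N₂) (hδ : 0 < δ)
    (hmono : ∀ a b : ℕ, a ≤ b → X a ≤ X b)
    (hsep : ∀ n, n+1 < N₁*N₂ → X n + δ ≤ X (n+1)) :
    ∀ m, m + 1 ≤ 2*N₁-1 → KK N₂ X m < KK N₂ X (m+1) := by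
  intro m hm
  exact Xlt hδ hmono hsep _ _ (kI_succ_lt hN₂ m) (kI_lt_N hN₁ hN₂ (m+1) hm)

lemma KK_gap (hN₁ : 2 ≤ N₁) (hN₂ : 2 ≤ N₂) (hδ : 0 < δ)
    (hmono : ∀ a b : ℕ, a ≤ b → X a ≤ X b)
    (hsep : ∀ n, n+1 < N₁*N₂ → X n + δ ≤ X (n+1)) :
    ∀ m, m + 1 ≤ 2*N₁-1 → KK N₂ X m + δ ≤ KK N₂ X (m+1) := by
  intro m hm
  exact Xgap hδ hmono hsep _ _ (kI_succ_lt hN₂ m) (kI_lt_N hN₁ hN₂ (m+1) hm)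

lemma line_mem (A B vA vB z : ℝ) (hAB : A < B) (h0A : 0 ≤ vA) (h1A : vA ≤ 1)
    (h0B : 0 ≤ vB) (h1B : vB ≤ 1) (hz1 : A ≤ z) (hz2 : z ≤ B) :
    0 ≤ vA + (vB - vA)/(B - A) * (z - A) ∧ vA + (vB - vA)/(B - A) * (z - A) ≤ 1 := by
  have hBA : 0 < B - A := by linarith
  have key : vA + (vB - vA)/(B - A) * (z - A) = (vA*(B - z) + vB*(z - A))/(B - A) := by
    field_simp; ring
  constructor
  · rw [key]
    apply div_nonneg _ (le_of_lt hBA)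
    nlinarith
  · rw [key, div_le_one hBA]
    nlinarith

end Ctx

section Tent
variable {ρ l p u w1 w2 z : ℝ}

lemma tentG1 (hρ : 0 ≤ ρ) (hlp : l < p) (hpu : p < u)
    (hw1 : w1 = ρ/(p-l)) (hw2 : w2 = ρ/(u-p)) (hz : z ≤ l) :
    max (2*max (w1*(z-l)/2) 0 - 4*max ((w1*(z-l) - w2*(u-z))/4) 0) 0 = 0 := by
  have hw1' : 0 ≤ w1 := by rw [hw1]; apply div_nonneg hρ; linarith
  have hw2' : 0 ≤ w2 := by rw [hw2]; apply div_nonneg hρ; linarith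
  have h1 : w1*(z-l)/2 ≤ 0 := by nlinarith [mul_nonneg hw1' (sub_nonneg.2 hz)]
  have h2 : (w1*(z-l) - w2*(u-z))/4 ≤ 0 := by
    nlinarith [mul_nonneg hw1' (sub_nonneg.2 hz), mul_nonneg hw2' (show (0:ℝ) ≤ u - z by linarith)]
  rw [max_eq_right h1, max_eq_right h2]
  norm_num

lemma tentG3 (hρ : 0 ≤ ρ) (hlp : l < p) (hpu : p < u)
    (hw1 : w1 = ρ/(p-l)) (hw2 : w2 = ρ/(u-p)) (hz : u ≤ z) :
    max (2*max (w1*(z-l)/2) 0 - 4*max ((w1*(z-l) - w2*(u-z))/4) 0) 0 = 0 := by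
  have hw1' : 0 ≤ w1 := by rw [hw1]; apply div_nonneg hρ; linarith
  have hw2' : 0 ≤ w2 := by rw [hw2]; apply div_nonneg hρ; linarith
  have h1 : 0 ≤ w1*(z-l)/2 := by
    have := mul_nonneg hw1' (show (0:ℝ) ≤ z - l by linarith); linarith
  have h2 : 0 ≤ (w1*(z-l) - w2*(u-z))/4 := by
    have ha := mul_nonneg hw1' (show (0:ℝ) ≤ z - l by linarith)
    have hb : w2*(u-z) ≤ 0 := mul_nonpos_of_nonneg_of_nonpos hw2' (by linarith)
    linarith
  rw [max_eq_left h1, max_eq_left h2]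
  have h3 : 2*(w1*(z-l)/2) - 4*((w1*(z-l) - w2*(u-z))/4) = w2*(u-z) := by ring
  rw [h3, max_eq_right (mul_nonpos_of_nonneg_of_nonpos hw2' (by linarith))]

lemma tentG4 (hρ : 0 ≤ ρ) (hlp : l < p) (hpu : p < u)
    (hw1 : w1 = ρ/(p-l)) (hw2 : w2 = ρ/(u-p)) (hz1 : l ≤ z) (hz2 : z ≤ p) :
    max (2*max (w1*(z-l)/2) 0 - 4*max ((w1*(z-l) - w2*(u-z))/4) 0) 0 = w1*(z-l) := by
  have hw1' : 0 ≤ w1 := by rw [hw1]; apply div_nonneg hρ; linarith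
  have hw2' : 0 ≤ w2 := by rw [hw2]; apply div_nonneg hρ; linarith
  have e1 : w1*(p-l) = ρ := by rw [hw1]; exact div_mul_cancel₀ ρ (sub_ne_zero.2 (ne_of_gt hlp))
  have e2 : w2*(u-p) = ρ := by rw [hw2]; exact div_mul_cancel₀ ρ (sub_ne_zero.2 (ne_of_gt hpu))
  have h1 : 0 ≤ w1*(z-l)/2 := by
    have := mul_nonneg hw1' (show (0:ℝ) ≤ z - l by linarith); linarith
  have h2 : (w1*(z-l) - w2*(u-z))/4 ≤ 0 := by
    nlinarith [mul_nonneg hw1' (show (0:ℝ) ≤ p - z by linarith),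
      mul_nonneg hw2' (show (0:ℝ) ≤ p - z by linarith)]
  rw [max_eq_left h1, max_eq_right h2]
  have h3 : 2*(w1*(z-l)/2) - 4*0 = w1*(z-l) := by ring
  rw [h3, max_eq_left (mul_nonneg hw1' (by linarith))]

lemma tentG5 (hρ : 0 ≤ ρ) (hlp : l < p) (hpu : p < u)
    (hw1 : w1 = ρ/(p-l)) (hw2 : w2 = ρ/(u-p)) (hz1 : p ≤ z) (hz2 : z ≤ u) :
    max (2*max (w1*(z-l)/2) 0 - 4*max ((w1*(z-l) - w2*(u-z))/4) 0) 0 = w2*(u-z) := by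
  have hw1' : 0 ≤ w1 := by rw [hw1]; apply div_nonneg hρ; linarith
  have hw2' : 0 ≤ w2 := by rw [hw2]; apply div_nonneg hρ; linarith
  have e1 : w1*(p-l) = ρ := by rw [hw1]; exact div_mul_cancel₀ ρ (sub_ne_zero.2 (ne_of_gt hlp))
  have e2 : w2*(u-p) = ρ := by rw [hw2]; exact div_mul_cancel₀ ρ (sub_ne_zero.2 (ne_of_gt hpu))
  have h1 : 0 ≤ w1*(z-l)/2 := by
    have := mul_nonneg hw1' (show (0:ℝ) ≤ z - l by linarith); linarith
  have h2 : 0 ≤ (w1*(z-l) - w2*(u-z))/4 := by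
    nlinarith [mul_nonneg hw1' (show (0:ℝ) ≤ z - p by linarith),
      mul_nonneg hw2' (show (0:ℝ) ≤ z - p by linarith)]
  rw [max_eq_left h1, max_eq_left h2]
  have h3 : 2*(w1*(z-l)/2) - 4*((w1*(z-l) - w2*(u-z))/4) = w2*(u-z) := by ring
  rw [h3, max_eq_left (mul_nonneg hw2' (by linarith))]

end Tent

end S18
namespace S18

open Finset

def iE (ε : Bool) (k : ℕ) : ℕ := if ε then 2*k+1 else 2*k+2

section Main
variable {N₁ N₂ : ℕ} {X Y : ℕ → ℝ} {δ : ℝ}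

lemma P2_eval (hN₁ : 2 ≤ N₁) (hN₂ : 2 ≤ N₂) (hδ : 0 < δ)
    (hmono : ∀ a b : ℕ, a ≤ b → X a ≤ X b)
    (hsep : ∀ n, n+1 < N₁*N₂ → X n + δ ≤ X (n+1))
    (i j : ℕ) (hj : j < N₁) (z : ℝ)
    (hz1 : KK N₂ X (2*j) ≤ z) (hz2 : z ≤ KK N₂ X (2*j+1)) :
    P2 N₁ N₂ X Y i z
      = F2 N₂ X Y i (2*j) + slp (KK N₂ X) (F2 N₂ X Y i) (2*j) * (z - KK N₂ X (2*j)) := by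
  rw [P2]
  exact pl_eval _ _ _ _ (KK_lt hN₁ hN₂ hδ hmono hsep) (by omega) z hz1 hz2

lemma KK_even (j : ℕ) : KK N₂ X (2*j) = X (j*N₂) := by rw [KK, kI_even]
lemma KK_odd (j : ℕ) : KK N₂ X (2*j+1) = X (j*N₂+(N₂-1)) := by rw [KK, kI_odd]

lemma P2L (hN₁ : 2 ≤ N₁) (hN₂ : 2 ≤ N₂) (hδ : 0 < δ)
    (hmono : ∀ a b : ℕ, a ≤ b → X a ≤ X b)
    (hsep : ∀ n, n+1 < N₁*N₂ → X n + δ ≤ X (n+1))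
    (j : ℕ) (hj : j < N₁) (z : ℝ)
    (hz1 : X (j*N₂) ≤ z) (hz2 : z ≤ X (j*N₂+(N₂-1))) :
    P2 N₁ N₂ X Y 0 z = Y (j*N₂) + sLL N₂ X Y j * (z - X (j*N₂)) := by
  rw [P2_eval hN₁ hN₂ hδ hmono hsep 0 j hj z (by rwa [KK_even]) (by rwa [KK_odd])]
  rw [F2_zero, slp]
  simp only [kI_even, kI_odd, KK_even, KK_odd]
  rw [sLL]

lemma slp_vLam (ε : Bool) (k j : ℕ) (hne : KK N₂ X (2*j+1) - KK N₂ X (2*j) ≠ 0) :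
    slp (KK N₂ X) (vLam N₂ X Y ε k) (2*j) = m1 N₂ X Y ε k j / 2 := by
  have h1 : (2*j)/2 = j := by omega
  have h2 : (2*j+1)/2 = j := by omega
  rw [slp]
  simp only [vLam, h1, h2]
  field_simp
  ring

lemma slp_vGam (ε : Bool) (k j : ℕ) (hne : KK N₂ X (2*j+1) - KK N₂ X (2*j) ≠ 0) :
    slp (KK N₂ X) (vGam N₂ X Y ε k) (2*j)
      = (m1 N₂ X Y ε k j + m2 N₂ X Y ε k j) / 4 := by
  have h1 : (2*j)/2 = j := by omega
  have h2 : (2*j+1)/2 = j := by omega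
  rw [slp]
  simp only [vGam, h1, h2]
  field_simp
  ring

lemma P2Lam (hN₁ : 2 ≤ N₁) (hN₂ : 2 ≤ N₂) (hδ : 0 < δ)
    (hmono : ∀ a b : ℕ, a ≤ b → X a ≤ X b)
    (hsep : ∀ n, n+1 < N₁*N₂ → X n + δ ≤ X (n+1))
    (ε : Bool) (k j : ℕ) (hk : k < N₂-2) (hj : j < N₁) (z : ℝ)
    (hz1 : X (j*N₂) ≤ z) (hz2 : z ≤ X (j*N₂+(N₂-1))) :
    P2 N₁ N₂ X Y (idxL ε k) z = m1 N₂ X Y ε k j * (z - X (j*N₂+k)) / 2 := by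
  have hne : KK N₂ X (2*j+1) - KK N₂ X (2*j) ≠ 0 := by
    have := KK_lt (X := X) hN₁ hN₂ hδ hmono hsep (2*j) (by omega)
    intro h; rw [sub_eq_zero] at h; rw [h] at this; exact lt_irrefl _ this
  rw [P2_eval hN₁ hN₂ hδ hmono hsep _ j hj z (by rwa [KK_even]) (by rwa [KK_odd])]
  rw [F2_idxL _ _ _ _ _ hk, slp_vLam _ _ _ hne]
  have h1 : (2*j)/2 = j := by omega
  simp only [vLam, h1, KK_even]
  ring

lemma P2Gam (hN₁ : 2 ≤ N₁) (hN₂ : 2 ≤ N₂) (hδ : 0 < δ)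
    (hmono : ∀ a b : ℕ, a ≤ b → X a ≤ X b)
    (hsep : ∀ n, n+1 < N₁*N₂ → X n + δ ≤ X (n+1))
    (ε : Bool) (k j : ℕ) (hk : k < N₂-2) (hj : j < N₁) (z : ℝ)
    (hz1 : X (j*N₂) ≤ z) (hz2 : z ≤ X (j*N₂+(N₂-1))) :
    P2 N₁ N₂ X Y (idxG ε k) z
      = (m1 N₂ X Y ε k j * (z - X (j*N₂+k))
          - m2 N₂ X Y ε k j * (X (j*N₂+k+2) - z)) / 4 := by
  have hne : KK N₂ X (2*j+1) - KK N₂ X (2*j) ≠ 0 := by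
    have := KK_lt (X := X) hN₁ hN₂ hδ hmono hsep (2*j) (by omega)
    intro h; rw [sub_eq_zero] at h; rw [h] at this; exact lt_irrefl _ this
  rw [P2_eval hN₁ hN₂ hδ hmono hsep _ j hj z (by rwa [KK_even]) (by rwa [KK_odd])]
  rw [F2_idxG _ _ _ _ _ hk, slp_vGam _ _ _ hne]
  have h1 : (2*j)/2 = j := by omega
  simp only [vGam, h1, KK_even]
  ring

lemma Lv_formula (hN₂ : 2 ≤ N₂) (j t : ℕ) (ht : t < N₂) :
    Lv N₂ X Y (j*N₂+t) = Y (j*N₂) + sLL N₂ X Y j * (X (j*N₂+t) - X (j*N₂)) := by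
  have hd : (j*N₂+t)/N₂ = j := div_cell (by omega) j t ht
  rw [Lv, hd]

lemma cell_idx_lt (hN₂ : 2 ≤ N₂) (j t : ℕ) (hj : j < N₁) (ht : t < N₂) :
    j*N₂ + t < N₁*N₂ := by
  have h1 : (j+1)*N₂ ≤ N₁*N₂ := Nat.mul_le_mul_right _ (by omega)
  have h2 : (j+1)*N₂ = j*N₂ + N₂ := by rw [Nat.succ_mul]
  omega

lemma Lv_left (hN₂ : 2 ≤ N₂) (j : ℕ) : Lv N₂ X Y (j*N₂) = Y (j*N₂) := by
  have := Lv_formula (X := X) (Y := Y) hN₂ j 0 (by omega)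
  simp only [Nat.add_zero] at this
  rw [this, sub_self, mul_zero, add_zero]

lemma Lv_right (hN₁ : 2 ≤ N₁) (hN₂ : 2 ≤ N₂) (hδ : 0 < δ)
    (hmono : ∀ a b : ℕ, a ≤ b → X a ≤ X b)
    (hsep : ∀ n, n+1 < N₁*N₂ → X n + δ ≤ X (n+1))
    (j : ℕ) (hj : j < N₁) :
    Lv N₂ X Y (j*N₂+(N₂-1)) = Y (j*N₂+(N₂-1)) := by
  rw [Lv_formula hN₂ j (N₂-1) (by omega)]
  have hlt : X (j*N₂) < X (j*N₂+(N₂-1)) :=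
    Xlt hδ hmono hsep _ _ (by omega) (cell_idx_lt hN₂ j (N₂-1) hj (by omega))
  have hne : X (j*N₂+(N₂-1)) - X (j*N₂) ≠ 0 := sub_ne_zero.2 (ne_of_gt hlt)
  rw [sLL, div_mul_cancel₀ _ hne]
  ring

lemma Lv_mem (hN₁ : 2 ≤ N₁) (hN₂ : 2 ≤ N₂) (hδ : 0 < δ)
    (hmono : ∀ a b : ℕ, a ≤ b → X a ≤ X b)
    (hsep : ∀ n, n+1 < N₁*N₂ → X n + δ ≤ X (n+1))
    (hY0 : ∀ n, 0 ≤ Y n) (hY1 : ∀ n, Y n ≤ 1)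
    (j t : ℕ) (hj : j < N₁) (ht : t < N₂) :
    0 ≤ Lv N₂ X Y (j*N₂+t) ∧ Lv N₂ X Y (j*N₂+t) ≤ 1 := by
  rw [Lv_formula hN₂ j t ht, sLL]
  exact line_mem _ _ _ _ _
    (Xlt hδ hmono hsep _ _ (by omega) (cell_idx_lt hN₂ j (N₂-1) hj (by omega)))
    (hY0 _) (hY1 _) (hY0 _) (hY1 _)
    (hmono _ _ (by omega)) (hmono _ _ (by omega))

lemma rhoE_nonneg (ε : Bool) (i : ℕ) : 0 ≤ rhoE N₂ X Y ε i := by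
  rw [rhoE]; cases ε <;> simp [le_max_right]

lemma rhoE_sub (i : ℕ) : rhoE N₂ X Y true i - rhoE N₂ X Y false i = rho N₂ X Y i := by
  have e1 : rhoE N₂ X Y true i = max (rho N₂ X Y i) 0 := by simp [rhoE]
  have e2 : rhoE N₂ X Y false i = max (-(rho N₂ X Y i)) 0 := by simp [rhoE]
  rw [e1, e2]
  rcases le_total (rho N₂ X Y i) 0 with h | h
  · rw [max_eq_right h, max_eq_left (by linarith)]; ring
  · rw [max_eq_left h, max_eq_right (by linarith)]; ring

lemma O3_zero (z : ℝ) : O3 N₁ N₂ X Y 0 z = max (P2 N₁ N₂ X Y 0 z) 0 := by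
  rw [O3, P3]
  simp only [if_pos rfl, O2]
  exact max_eq_left (le_max_right _ _)

lemma O3_tent (ε : Bool) (k : ℕ) (hk : k < N₂-2) (z : ℝ) :
    O3 N₁ N₂ X Y (iE ε k) z
      = max (2*max (P2 N₁ N₂ X Y (idxL ε k) z) 0
            - 4*max (P2 N₁ N₂ X Y (idxG ε k) z) 0) 0 := by
  cases ε
  · have h0 : 2*k+2 ≠ 0 := by omega
    have h1 : (2*k+2-1)/2 = k := by omega
    have h2 : (2*k+2-1)%2 = 1 := by omega
    have e1 : 4*k+2*1+1 = idxL false k := by simp [idxL]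
    have e2 : 4*k+2*1+2 = idxG false k := by simp [idxG]
    simp only [iE, if_neg, Bool.false_eq_true, ite_false, O3, P3, h0, ite_false, h1, h2,
      if_pos hk, e1, e2, O2] <;> simp [h0, hk]
  · have h0 : 2*k+1 ≠ 0 := by omega
    have h1 : (2*k+1-1)/2 = k := by omega
    have h2 : (2*k+1-1)%2 = 0 := by omega
    have e1 : 4*k+2*0+1 = idxL true k := by simp [idxL]
    have e2 : 4*k+2*0+2 = idxG true k := by simp [idxG]
    simp only [iE, ite_true, O3, P3, h0, h1, h2, if_pos hk, e1, e2, O2] <;> simp [h0, hk]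

end Main

end S18
namespace S18

open Finset

section Main2
variable {N₁ N₂ : ℕ} {X Y : ℕ → ℝ} {δ : ℝ}

lemma iE_true (k : ℕ) : iE true k = 2*k+1 := by simp [iE]
lemma iE_false (k : ℕ) : iE false k = 2*k+2 := by simp [iE]

lemma tent_eval (hN₁ : 2 ≤ N₁) (hN₂ : 2 ≤ N₂) (hδ : 0 < δ)
    (hmono : ∀ a b : ℕ, a ≤ b → X a ≤ X b)
    (hsep : ∀ n, n+1 < N₁*N₂ → X n + δ ≤ X (n+1))
    (ε : Bool) (k j t : ℕ) (hk : k < N₂-2) (hj : j < N₁) (ht : t < N₂) :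
    O3 N₁ N₂ X Y (iE ε k) (X (j*N₂+t))
      = if t = k+1 then rhoE N₂ X Y ε (j*N₂+k+1) else 0 := by
  have hz1 : X (j*N₂) ≤ X (j*N₂+t) := hmono _ _ (by omega)
  have hz2 : X (j*N₂+t) ≤ X (j*N₂+(N₂-1)) := hmono _ _ (by omega)
  have hiP : j*N₂+(k+1) < N₁*N₂ := cell_idx_lt hN₂ j (k+1) hj (by omega)
  have hiU : j*N₂+(k+2) < N₁*N₂ := cell_idx_lt hN₂ j (k+2) hj (by omega)
  have hlp : X (j*N₂+k) < X (j*N₂+k+1) :=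
    Xlt hδ hmono hsep _ _ (by omega) (by omega)
  have hpu : X (j*N₂+k+1) < X (j*N₂+k+2) :=
    Xlt hδ hmono hsep _ _ (by omega) (by omega)
  have hρ : 0 ≤ rhoE N₂ X Y ε (j*N₂+k+1) := rhoE_nonneg ε _
  have hw1 : m1 N₂ X Y ε k j
      = rhoE N₂ X Y ε (j*N₂+k+1) / (X (j*N₂+k+1) - X (j*N₂+k)) := rfl
  have hw2 : m2 N₂ X Y ε k j
      = rhoE N₂ X Y ε (j*N₂+k+1) / (X (j*N₂+k+2) - X (j*N₂+k+1)) := rfl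
  rw [O3_tent ε k hk, P2Lam hN₁ hN₂ hδ hmono hsep ε k j hk hj _ hz1 hz2,
      P2Gam hN₁ hN₂ hδ hmono hsep ε k j hk hj _ hz1 hz2]
  rcases Nat.lt_trichotomy t (k+1) with hc | hc | hc
  · rw [if_neg (by omega)]
    exact tentG1 hρ hlp hpu hw1 hw2 (hmono _ _ (by omega))
  · rw [if_pos hc]
    subst hc
    have e : j*N₂+(k+1) = j*N₂+k+1 := by omega
    rw [e]
    rw [tentG5 hρ hlp hpu hw1 hw2 le_rfl (le_of_lt hpu), hw2]
    exact div_mul_cancel₀ _ (sub_ne_zero.2 (ne_of_gt hpu))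
  · rw [if_neg (by omega)]
    exact tentG3 hρ hlp hpu hw1 hw2 (hmono _ _ (by omega))

lemma tent_lin (hN₁ : 2 ≤ N₁) (hN₂ : 2 ≤ N₂) (hδ : 0 < δ)
    (hmono : ∀ a b : ℕ, a ≤ b → X a ≤ X b)
    (hsep : ∀ n, n+1 < N₁*N₂ → X n + δ ≤ X (n+1))
    (ε : Bool) (k j t : ℕ) (hk : k < N₂-2) (hj : j < N₁) (ht2 : t+2 ≤ N₂) :
    ∃ a b : ℝ, ∀ z, X (j*N₂+t) ≤ z → z ≤ X (j*N₂+t+1) →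
      O3 N₁ N₂ X Y (iE ε k) z = a*z+b := by
  have hiP : j*N₂+(k+1) < N₁*N₂ := cell_idx_lt hN₂ j (k+1) hj (by omega)
  have hiU : j*N₂+(k+2) < N₁*N₂ := cell_idx_lt hN₂ j (k+2) hj (by omega)
  have hlp : X (j*N₂+k) < X (j*N₂+k+1) :=
    Xlt hδ hmono hsep _ _ (by omega) (by omega)
  have hpu : X (j*N₂+k+1) < X (j*N₂+k+2) :=
    Xlt hδ hmono hsep _ _ (by omega) (by omega)
  have hρ : 0 ≤ rhoE N₂ X Y ε (j*N₂+k+1) := rhoE_nonneg ε _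
  have hw1 : m1 N₂ X Y ε k j
      = rhoE N₂ X Y ε (j*N₂+k+1) / (X (j*N₂+k+1) - X (j*N₂+k)) := rfl
  have hw2 : m2 N₂ X Y ε k j
      = rhoE N₂ X Y ε (j*N₂+k+1) / (X (j*N₂+k+2) - X (j*N₂+k+1)) := rfl
  have hcell : ∀ z, X (j*N₂+t) ≤ z → z ≤ X (j*N₂+t+1) →
      X (j*N₂) ≤ z ∧ z ≤ X (j*N₂+(N₂-1)) := by
    intro z h1 h2
    exact ⟨le_trans (hmono _ _ (by omega)) h1, le_trans h2 (hmono _ _ (by omega))⟩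
  by_cases hc1 : t < k
  · refine ⟨0, 0, ?_⟩
    intro z h1 h2
    obtain ⟨hcl, hcr⟩ := hcell z h1 h2
    rw [O3_tent ε k hk, P2Lam hN₁ hN₂ hδ hmono hsep ε k j hk hj _ hcl hcr,
        P2Gam hN₁ hN₂ hδ hmono hsep ε k j hk hj _ hcl hcr,
        tentG1 hρ hlp hpu hw1 hw2 (le_trans h2 (hmono _ _ (by omega)))]
    ring
  by_cases hc2 : t = k
  · subst hc2
    refine ⟨m1 N₂ X Y ε t j, -(m1 N₂ X Y ε t j * X (j*N₂+t)), ?_⟩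
    intro z h1 h2
    obtain ⟨hcl, hcr⟩ := hcell z h1 h2
    rw [O3_tent ε t hk, P2Lam hN₁ hN₂ hδ hmono hsep ε t j hk hj _ hcl hcr,
        P2Gam hN₁ hN₂ hδ hmono hsep ε t j hk hj _ hcl hcr,
        tentG4 hρ hlp hpu hw1 hw2 h1 h2]
    ring
  by_cases hc3 : t = k+1
  · subst hc3
    have e1 : j*N₂+(k+1) = j*N₂+k+1 := by omega
    have e2 : j*N₂+(k+1)+1 = j*N₂+k+2 := by omega
    refine ⟨-(m2 N₂ X Y ε k j), m2 N₂ X Y ε k j * X (j*N₂+k+2), ?_⟩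
    intro z h1 h2
    rw [e1] at h1
    rw [e2] at h2
    obtain ⟨hcl, hcr⟩ := hcell z (by rwa [e1]) (by rwa [e2])
    rw [O3_tent ε k hk, P2Lam hN₁ hN₂ hδ hmono hsep ε k j hk hj _ hcl hcr,
        P2Gam hN₁ hN₂ hδ hmono hsep ε k j hk hj _ hcl hcr,
        tentG5 hρ hlp hpu hw1 hw2 h1 h2]
    ring
  · refine ⟨0, 0, ?_⟩
    intro z h1 h2
    obtain ⟨hcl, hcr⟩ := hcell z h1 h2
    rw [O3_tent ε k hk, P2Lam hN₁ hN₂ hδ hmono hsep ε k j hk hj _ hcl hcr,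
        P2Gam hN₁ hN₂ hδ hmono hsep ε k j hk hj _ hcl hcr,
        tentG3 hρ hlp hpu hw1 hw2 (le_trans (hmono _ _ (by omega)) h1)]
    ring

theorem GD_interp (hN₁ : 2 ≤ N₁) (hN₂ : 2 ≤ N₂) (hδ : 0 < δ)
    (hmono : ∀ a b : ℕ, a ≤ b → X a ≤ X b)
    (hsep : ∀ n, n+1 < N₁*N₂ → X n + δ ≤ X (n+1))
    (hY0 : ∀ n, 0 ≤ Y n) (hY1 : ∀ n, Y n ≤ 1)
    (j t : ℕ) (hj : j < N₁) (ht : t < N₂) :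
    GD N₁ N₂ X Y (X (j*N₂+t)) = Y (j*N₂+t) := by
  have hz1 : X (j*N₂) ≤ X (j*N₂+t) := hmono _ _ (by omega)
  have hz2 : X (j*N₂+t) ≤ X (j*N₂+(N₂-1)) := hmono _ _ (by omega)
  have hO3 : O3 N₁ N₂ X Y 0 (X (j*N₂+t)) = Lv N₂ X Y (j*N₂+t) := by
    rw [O3_zero, P2L hN₁ hN₂ hδ hmono hsep j hj _ hz1 hz2,
      ← Lv_formula hN₂ j t ht]
    exact max_eq_left (Lv_mem hN₁ hN₂ hδ hmono hsep hY0 hY1 j t hj ht).1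
  have hterm : ∀ k ∈ Finset.range (N₂-2),
      O3 N₁ N₂ X Y (2*k+1) (X (j*N₂+t)) - O3 N₁ N₂ X Y (2*k+2) (X (j*N₂+t))
        = if t = k+1 then rho N₂ X Y (j*N₂+k+1) else 0 := by
    intro k hkr
    rw [Finset.mem_range] at hkr
    rw [← iE_true k, ← iE_false k,
      tent_eval hN₁ hN₂ hδ hmono hsep true k j t hkr hj ht,
      tent_eval hN₁ hN₂ hδ hmono hsep false k j t hkr hj ht]
    split_ifs with h
    · exact rhoE_sub _
    · ring
  rw [GD, hO3, Finset.sum_congr rfl hterm]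
  by_cases ht0 : t = 0
  · subst ht0
    rw [Finset.sum_eq_zero (fun k hk => if_neg (by omega)), add_zero]
    have e : j*N₂+0 = j*N₂ := by omega
    rw [e, Lv_left hN₂ j]
  by_cases ht1 : t = N₂-1
  · rw [Finset.sum_eq_zero, add_zero]
    · subst ht1
      exact Lv_right hN₁ hN₂ hδ hmono hsep j hj
    · intro k hk
      rw [Finset.mem_range] at hk
      exact if_neg (by omega)
  · have hmem : t-1 ∈ Finset.range (N₂-2) := by rw [Finset.mem_range]; omega
    have hcong : ∀ k ∈ Finset.range (N₂-2),
        (if t = k+1 then rho N₂ X Y (j*N₂+k+1) else 0)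
          = (if k = t-1 then rho N₂ X Y (j*N₂+k+1) else 0) := by
      intro k hk
      by_cases h : t = k+1
      · rw [if_pos h, if_pos (by omega)]
      · rw [if_neg h, if_neg (by omega)]
    rw [Finset.sum_congr rfl hcong,
      Finset.sum_ite_eq' (Finset.range (N₂-2)) (t-1) (fun k => rho N₂ X Y (j*N₂+k+1)),
      if_pos hmem]
    have e : j*N₂+(t-1)+1 = j*N₂+t := by omega
    rw [e, rho]
    ring

theorem GD_lin (hN₁ : 2 ≤ N₁) (hN₂ : 2 ≤ N₂) (hδ : 0 < δ)
    (hmono : ∀ a b : ℕ, a ≤ b → X a ≤ X b)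
    (hsep : ∀ n, n+1 < N₁*N₂ → X n + δ ≤ X (n+1))
    (hY0 : ∀ n, 0 ≤ Y n) (hY1 : ∀ n, Y n ≤ 1)
    (j t : ℕ) (hj : j < N₁) (ht2 : t+2 ≤ N₂) :
    ∃ a b : ℝ, ∀ z, X (j*N₂+t) ≤ z → z ≤ X (j*N₂+t+1) → GD N₁ N₂ X Y z = a*z + b := by
  have hT : ∀ (ε : Bool) (k : ℕ), ∃ ab : ℝ × ℝ, k < N₂-2 → ∀ z,
      X (j*N₂+t) ≤ z → z ≤ X (j*N₂+t+1) → O3 N₁ N₂ X Y (iE ε k) z = ab.1*z+ab.2 := by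
    intro ε k
    by_cases hk : k < N₂-2
    · obtain ⟨a, b, hab⟩ := tent_lin hN₁ hN₂ hδ hmono hsep ε k j t hk hj ht2
      exact ⟨(a, b), fun _ => hab⟩
    · exact ⟨(0,0), fun h => absurd h hk⟩
  choose ab hab using hT
  refine ⟨sLL N₂ X Y j + ∑ k ∈ Finset.range (N₂-2), ((ab true k).1 - (ab false k).1),
    (Y (j*N₂) - sLL N₂ X Y j * X (j*N₂))
      + ∑ k ∈ Finset.range (N₂-2), ((ab true k).2 - (ab false k).2), ?_⟩
  intro z hz1 hz2
  have hc1 : X (j*N₂) ≤ z := le_trans (hmono _ _ (by omega)) hz1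
  have hc2 : z ≤ X (j*N₂+(N₂-1)) := le_trans hz2 (hmono _ _ (by omega))
  have hO3 : O3 N₁ N₂ X Y 0 z = Y (j*N₂) + sLL N₂ X Y j * (z - X (j*N₂)) := by
    rw [O3_zero, P2L hN₁ hN₂ hδ hmono hsep j hj z hc1 hc2]
    refine max_eq_left ?_
    rw [sLL]
    exact (line_mem _ _ _ _ z
      (Xlt hδ hmono hsep _ _ (by omega) (cell_idx_lt hN₂ j (N₂-1) hj (by omega)))
      (hY0 _) (hY1 _) (hY0 _) (hY1 _) hc1 hc2).1
  have hterm : ∀ k ∈ Finset.range (N₂-2),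
      O3 N₁ N₂ X Y (2*k+1) z - O3 N₁ N₂ X Y (2*k+2) z
        = ((ab true k).1 - (ab false k).1)*z + ((ab true k).2 - (ab false k).2) := by
    intro k hk
    rw [Finset.mem_range] at hk
    rw [← iE_true k, ← iE_false k, hab true k hk z hz1 hz2, hab false k hk z hz1 hz2]
    ring
  rw [GD, hO3, Finset.sum_congr rfl hterm, Finset.sum_add_distrib, ← Finset.sum_mul]
  ring

end Main2

end S18
namespace S18

open Finset

section Bounds
variable {N₁ N₂ : ℕ} {X Y : ℕ → ℝ} {δ : ℝ}

lemma slp_abs (q v : ℕ → ℝ) (m : ℕ) {δ c : ℝ} (hδ : 0 < δ)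
    (hgap : δ ≤ q (m+1) - q m) (hc : 0 ≤ c)
    (hv1 : |v m| ≤ c) (hv2 : |v (m+1)| ≤ c) : |slp q v m| ≤ 2*c/δ := by
  have h2 : 0 < q (m+1) - q m := lt_of_lt_of_le hδ hgap
  rw [slp, abs_div, abs_of_pos h2]
  apply div_le_div₀ (by linarith) _ hδ hgap
  calc |v (m+1) - v m| ≤ |v (m+1)| + |v m| := abs_sub _ _
  _ ≤ 2*c := by linarith

lemma plc_bound (q v : ℕ → ℝ) (M : ℕ) {δ c : ℝ} (hδ : 0 < δ) (hc : 0 ≤ c)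
    (hgap : ∀ m, m+1 ≤ M → δ ≤ q (m+1) - q m) (hv : ∀ m, m ≤ M → |v m| ≤ c) :
    ∀ m, m+1 ≤ M → |plc q v m| ≤ 4*c/δ := by
  intro m hm
  have hs : |slp q v m| ≤ 2*c/δ :=
    slp_abs q v m hδ (hgap m hm) hc (hv m (by omega)) (hv (m+1) hm)
  have h24 : 2*c/δ ≤ 4*c/δ := by gcongr <;> linarith
  by_cases h0 : m = 0
  · subst h0
    rw [plc, if_pos rfl, sub_zero]
    linarith
  · rw [plc, if_neg h0]
    have hs' : |slp q v (m-1)| ≤ 2*c/δ :=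
      slp_abs q v (m-1) hδ (hgap _ (by omega)) hc (hv _ (by omega)) (hv _ (by omega))
    have he : 2*c/δ + 2*c/δ = 4*c/δ := by ring
    calc |slp q v m - slp q v (m-1)| ≤ |slp q v m| + |slp q v (m-1)| := abs_sub _ _
    _ ≤ 4*c/δ := by linarith


lemma KK_gap_ge (hN₁ : 2 ≤ N₁) (hN₂ : 2 ≤ N₂) (hδ : 0 < δ)
    (hmono : ∀ a b : ℕ, a ≤ b → X a ≤ X b)
    (hsep : ∀ n, n+1 < N₁*N₂ → X n + δ ≤ X (n+1)) :
    ∀ m, m+1 ≤ 2*N₁-1 → δ ≤ KK N₂ X (m+1) - KK N₂ X m := by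
  intro m hm
  have := KK_gap hN₁ hN₂ hδ hmono hsep m hm
  linarith

lemma rhoE_le_one (hN₁ : 2 ≤ N₁) (hN₂ : 2 ≤ N₂) (hδ : 0 < δ)
    (hmono : ∀ a b : ℕ, a ≤ b → X a ≤ X b)
    (hsep : ∀ n, n+1 < N₁*N₂ → X n + δ ≤ X (n+1))
    (hY0 : ∀ n, 0 ≤ Y n) (hY1 : ∀ n, Y n ≤ 1)
    (ε : Bool) (k j : ℕ) (hk : k+1 < N₂) (hj : j < N₁) :
    rhoE N₂ X Y ε (j*N₂+k+1) ≤ 1 := by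
  have e : j*N₂+k+1 = j*N₂+(k+1) := by omega
  rw [e]
  have hL := Lv_mem hN₁ hN₂ hδ hmono hsep hY0 hY1 j (k+1) hj hk
  have hr1 : rho N₂ X Y (j*N₂+(k+1)) ≤ 1 := by
    rw [rho]; have := hY1 (j*N₂+(k+1)); linarith [hL.1]
  have hr2 : -(rho N₂ X Y (j*N₂+(k+1))) ≤ 1 := by
    rw [rho]; have := hY0 (j*N₂+(k+1)); linarith [hL.2]
  cases ε
  · rw [show rhoE N₂ X Y false (j*N₂+(k+1)) = max (-(rho N₂ X Y (j*N₂+(k+1)))) 0 by simp [rhoE]]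
    exact max_le hr2 (by norm_num)
  · rw [show rhoE N₂ X Y true (j*N₂+(k+1)) = max (rho N₂ X Y (j*N₂+(k+1))) 0 by simp [rhoE]]
    exact max_le hr1 (by norm_num)

lemma m1_abs (hN₁ : 2 ≤ N₁) (hN₂ : 2 ≤ N₂) (hδ : 0 < δ)
    (hmono : ∀ a b : ℕ, a ≤ b → X a ≤ X b)
    (hsep : ∀ n, n+1 < N₁*N₂ → X n + δ ≤ X (n+1))
    (hY0 : ∀ n, 0 ≤ Y n) (hY1 : ∀ n, Y n ≤ 1)
    (ε : Bool) (k j : ℕ) (hk : k+2 ≤ N₂) (hj : j < N₁) :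
    |m1 N₂ X Y ε k j| ≤ 1/δ := by
  have hiP : j*N₂+(k+1) < N₁*N₂ := cell_idx_lt hN₂ j (k+1) hj (by omega)
  have hd : δ ≤ X (j*N₂+k+1) - X (j*N₂+k) := by
    have := Xgap hδ hmono hsep (j*N₂+k) (j*N₂+k+1) (by omega) (by omega)
    linarith
  have hρ0 : 0 ≤ rhoE N₂ X Y ε (j*N₂+k+1) := rhoE_nonneg ε _
  have hρ1 := rhoE_le_one hN₁ hN₂ hδ hmono hsep hY0 hY1 ε k j (by omega) hj
  rw [m1, abs_div, abs_of_nonneg hρ0, abs_of_pos (by linarith)]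
  exact div_le_div₀ (by norm_num) hρ1 hδ hd

lemma m2_abs (hN₁ : 2 ≤ N₁) (hN₂ : 2 ≤ N₂) (hδ : 0 < δ)
    (hmono : ∀ a b : ℕ, a ≤ b → X a ≤ X b)
    (hsep : ∀ n, n+1 < N₁*N₂ → X n + δ ≤ X (n+1))
    (hY0 : ∀ n, 0 ≤ Y n) (hY1 : ∀ n, Y n ≤ 1)
    (ε : Bool) (k j : ℕ) (hk : k+3 ≤ N₂) (hj : j < N₁) :
    |m2 N₂ X Y ε k j| ≤ 1/δ := by
  have hiU : j*N₂+(k+2) < N₁*N₂ := cell_idx_lt hN₂ j (k+2) hj (by omega)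
  have hd : δ ≤ X (j*N₂+k+2) - X (j*N₂+k+1) := by
    have := Xgap hδ hmono hsep (j*N₂+k+1) (j*N₂+k+2) (by omega) (by omega)
    linarith
  have hρ0 : 0 ≤ rhoE N₂ X Y ε (j*N₂+k+1) := rhoE_nonneg ε _
  have hρ1 := rhoE_le_one hN₁ hN₂ hδ hmono hsep hY0 hY1 ε k j (by omega) hj
  rw [m2, abs_div, abs_of_nonneg hρ0, abs_of_pos (by linarith)]
  exact div_le_div₀ (by norm_num) hρ1 hδ hd

lemma vLam_abs (hN₁ : 2 ≤ N₁) (hN₂ : 2 ≤ N₂) (hδ : 0 < δ)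
    (hmono : ∀ a b : ℕ, a ≤ b → X a ≤ X b)
    (hsep : ∀ n, n+1 < N₁*N₂ → X n + δ ≤ X (n+1))
    (hX0 : ∀ n, 0 ≤ X n) (hX1 : ∀ n, X n ≤ 1)
    (hY0 : ∀ n, 0 ≤ Y n) (hY1 : ∀ n, Y n ≤ 1)
    (ε : Bool) (k m : ℕ) (hk : k+2 ≤ N₂) (hm : m ≤ 2*N₁-1) :
    |vLam N₂ X Y ε k m| ≤ 1/δ := by
  have hj : m/2 < N₁ := by omega
  have h1 := m1_abs hN₁ hN₂ hδ hmono hsep hY0 hY1 ε k (m/2) hk hj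
  have h2 : |KK N₂ X m - X ((m/2)*N₂+k)| ≤ 1 := by
    rw [KK, abs_le]
    constructor
    · have := hX0 (kI N₂ m); have := hX1 ((m/2)*N₂+k); linarith
    · have := hX1 (kI N₂ m); have := hX0 ((m/2)*N₂+k); linarith
  have hδ' : (0:ℝ) < 1/δ := by positivity
  rw [vLam, abs_div, abs_mul]
  have hnum : |m1 N₂ X Y ε k (m/2)| * |KK N₂ X m - X ((m/2)*N₂+k)| ≤ 1/δ :=
    le_trans (mul_le_mul h1 h2 (abs_nonneg _) (by positivity)) (by linarith)
  rw [show |(2:ℝ)| = 2 by norm_num]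
  linarith [hnum]

lemma vGam_abs (hN₁ : 2 ≤ N₁) (hN₂ : 2 ≤ N₂) (hδ : 0 < δ)
    (hmono : ∀ a b : ℕ, a ≤ b → X a ≤ X b)
    (hsep : ∀ n, n+1 < N₁*N₂ → X n + δ ≤ X (n+1))
    (hX0 : ∀ n, 0 ≤ X n) (hX1 : ∀ n, X n ≤ 1)
    (hY0 : ∀ n, 0 ≤ Y n) (hY1 : ∀ n, Y n ≤ 1)
    (ε : Bool) (k m : ℕ) (hk : k+3 ≤ N₂) (hm : m ≤ 2*N₁-1) :
    |vGam N₂ X Y ε k m| ≤ 1/δ := by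
  have hj : m/2 < N₁ := by omega
  have h1 := m1_abs hN₁ hN₂ hδ hmono hsep hY0 hY1 ε k (m/2) (by omega) hj
  have h1' := m2_abs hN₁ hN₂ hδ hmono hsep hY0 hY1 ε k (m/2) hk hj
  have h2 : |KK N₂ X m - X ((m/2)*N₂+k)| ≤ 1 := by
    rw [KK, abs_le]
    constructor
    · have := hX0 (kI N₂ m); have := hX1 ((m/2)*N₂+k); linarith
    · have := hX1 (kI N₂ m); have := hX0 ((m/2)*N₂+k); linarith
  have h3 : |X ((m/2)*N₂+k+2) - KK N₂ X m| ≤ 1 := by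
    rw [KK, abs_le]
    constructor
    · have := hX0 ((m/2)*N₂+k+2); have := hX1 (kI N₂ m); linarith
    · have := hX1 ((m/2)*N₂+k+2); have := hX0 (kI N₂ m); linarith
  have hδ' : (0:ℝ) < 1/δ := by positivity
  have hA : |m1 N₂ X Y ε k (m/2) * (KK N₂ X m - X ((m/2)*N₂+k))| ≤ 1/δ := by
    rw [abs_mul]
    exact le_trans (mul_le_mul h1 h2 (abs_nonneg _) (by positivity)) (by linarith)
  have hB : |m2 N₂ X Y ε k (m/2) * (X ((m/2)*N₂+k+2) - KK N₂ X m)| ≤ 1/δ := by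
    rw [abs_mul]
    exact le_trans (mul_le_mul h1' h3 (abs_nonneg _) (by positivity)) (by linarith)
  rw [vGam, abs_div, show |(4:ℝ)| = 4 by norm_num]
  have := abs_sub (m1 N₂ X Y ε k (m/2) * (KK N₂ X m - X ((m/2)*N₂+k)))
    (m2 N₂ X Y ε k (m/2) * (X ((m/2)*N₂+k+2) - KK N₂ X m))
  linarith

lemma F2_val_bound (hN₁ : 2 ≤ N₁) (hN₂ : 2 ≤ N₂) (hδ : 0 < δ) (hδ1 : δ ≤ 1)
    (hmono : ∀ a b : ℕ, a ≤ b → X a ≤ X b)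
    (hsep : ∀ n, n+1 < N₁*N₂ → X n + δ ≤ X (n+1))
    (hX0 : ∀ n, 0 ≤ X n) (hX1 : ∀ n, X n ≤ 1)
    (hY0 : ∀ n, 0 ≤ Y n) (hY1 : ∀ n, Y n ≤ 1) :
    ∀ i m, m ≤ 2*N₁-1 → |F2 N₂ X Y i m| ≤ 1/δ := by
  intro i m hm
  have hone : (1:ℝ) ≤ 1/δ := by rw [le_div_iff₀ hδ]; linarith
  rw [F2]
  split_ifs with h0 h1 h2 h3 h4
  · show |Y (kI N₂ m)| ≤ 1/δ
    rw [abs_le]; constructor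
    · have := hY0 (kI N₂ m); linarith
    · have := hY1 (kI N₂ m); linarith
  · exact vLam_abs hN₁ hN₂ hδ hmono hsep hX0 hX1 hY0 hY1 true _ m (by omega) hm
  · exact vGam_abs hN₁ hN₂ hδ hmono hsep hX0 hX1 hY0 hY1 true _ m (by omega) hm
  · exact vLam_abs hN₁ hN₂ hδ hmono hsep hX0 hX1 hY0 hY1 false _ m (by omega) hm
  · exact vGam_abs hN₁ hN₂ hδ hmono hsep hX0 hX1 hY0 hY1 false _ m (by omega) hm
  · show |(0:ℝ)| ≤ 1/δ
    rw [abs_zero]; positivity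

lemma F2_plc_bound (hN₁ : 2 ≤ N₁) (hN₂ : 2 ≤ N₂) (hδ : 0 < δ) (hδ1 : δ ≤ 1)
    (hmono : ∀ a b : ℕ, a ≤ b → X a ≤ X b)
    (hsep : ∀ n, n+1 < N₁*N₂ → X n + δ ≤ X (n+1))
    (hX0 : ∀ n, 0 ≤ X n) (hX1 : ∀ n, X n ≤ 1)
    (hY0 : ∀ n, 0 ≤ Y n) (hY1 : ∀ n, Y n ≤ 1) :
    ∀ i m, m+1 ≤ 2*N₁-1 → |plc (KK N₂ X) (F2 N₂ X Y i) m| ≤ 4/δ^2 := by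
  intro i m hm
  have h := plc_bound (KK N₂ X) (F2 N₂ X Y i) (2*N₁-1) hδ (by positivity)
    (KK_gap_ge hN₁ hN₂ hδ hmono hsep)
    (F2_val_bound hN₁ hN₂ hδ hδ1 hmono hsep hX0 hX1 hY0 hY1 i) m hm
  have he : 4*(1/δ)/δ = 4/δ^2 := by
    field_simp
  linarith [h, he.symm.le, he.le]

end Bounds

end S18
namespace S18

open Finset

def sgB (i : ℕ) : Bool := (i-1) % 2 == 0

lemma idxL_sg (i : ℕ) : idxL (sgB i) ((i-1)/2) = 4*((i-1)/2) + 2*((i-1)%2) + 1 := by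
  rcases Nat.mod_two_eq_zero_or_one (i-1) with h | h <;> simp [sgB, idxL, h]

lemma idxG_sg (i : ℕ) : idxG (sgB i) ((i-1)/2) = 4*((i-1)/2) + 2*((i-1)%2) + 2 := by
  rcases Nat.mod_two_eq_zero_or_one (i-1) with h | h <;> simp [sgB, idxG, h]

noncomputable def A1 (N₁ N₂ : ℕ) (X : ℕ → ℝ) : Layer 1 (2*N₁-1) :=
  ⟨fun _ _ => 1, fun i => -(KK N₂ X (i:ℕ))⟩

noncomputable def A2 (N₁ N₂ : ℕ) (X Y : ℕ → ℝ) : Layer (2*N₁-1) (4*(N₂-2)+2) :=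
  ⟨fun i m => plc (KK N₂ X) (F2 N₂ X Y (i:ℕ)) (m:ℕ), fun i => F2 N₂ X Y (i:ℕ) 0⟩

noncomputable def A3 (N₂ : ℕ) : Layer (4*(N₂-2)+2) (8*(N₂-2)+2) :=
  ⟨fun i m =>
    if (i:ℕ) = 0 then (if (m:ℕ) = 0 then 1 else 0)
    else if ((i:ℕ)-1)/2 < N₂-2 then
      ((if (m:ℕ) = idxL (sgB (i:ℕ)) (((i:ℕ)-1)/2) then 2 else 0)
        + (if (m:ℕ) = idxG (sgB (i:ℕ)) (((i:ℕ)-1)/2) then -4 else 0))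
    else 0,
   fun _ => 0⟩

noncomputable def A4 (N₂ : ℕ) : Layer (8*(N₂-2)+2) 1 :=
  ⟨fun _ i =>
    if (i:ℕ) = 0 then 1
    else if ((i:ℕ)-1)/2 < N₂-2 then (if ((i:ℕ)-1) % 2 = 0 then 1 else -1)
    else 0,
   fun _ => 0⟩

lemma net_eq (N₁ N₂ : ℕ) (X Y : ℕ → ℝ) (z : ℝ) :
    (A4 N₂).apply (reluVec ((A3 N₂).apply (reluVec ((A2 N₁ N₂ X Y).apply
      (reluVec ((A1 N₁ N₂ X).apply fun _ => z)))))) 0 = GD N₁ N₂ X Y z := by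
  have s1 : reluVec ((A1 N₁ N₂ X).apply fun _ => z)
      = fun m : Fin (2*N₁-1) => max (z - KK N₂ X (m:ℕ)) 0 := by
    funext m
    simp only [reluVec, A1, Layer.apply, Fin.sum_univ_one]
    congr 1
    ring
  have s2 : reluVec ((A2 N₁ N₂ X Y).apply (fun m : Fin (2*N₁-1) => max (z - KK N₂ X (m:ℕ)) 0))
      = fun i : Fin (4*(N₂-2)+2) => O2 N₁ N₂ X Y (i:ℕ) z := by
    funext i
    simp only [reluVec, A2, Layer.apply, O2, P2]
    congr 1
    rw [Fin.sum_univ_eq_sum_range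
      (fun m => plc (KK N₂ X) (F2 N₂ X Y (i:ℕ)) m * max (z - KK N₂ X m) 0) (2*N₁-1)]
    ring
  have s3 : reluVec ((A3 N₂).apply (fun m : Fin (4*(N₂-2)+2) => O2 N₁ N₂ X Y (m:ℕ) z))
      = fun i : Fin (8*(N₂-2)+2) => O3 N₁ N₂ X Y (i:ℕ) z := by
    funext i
    simp only [reluVec, A3, Layer.apply, O3]
    congr 1
    by_cases hi0 : (i:ℕ) = 0
    · simp only [hi0, P3, if_true, ite_true, eq_self_iff_true]
      rw [fin_sum_single 0 (by omega) 1 (fun m : Fin (4*(N₂-2)+2) => O2 N₁ N₂ X Y (m:ℕ) z)]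
      simp
    · by_cases hk : ((i:ℕ)-1)/2 < N₂-2
      · have hA : idxL (sgB (i:ℕ)) (((i:ℕ)-1)/2) < 4*(N₂-2)+2 := by
          cases h : sgB (i:ℕ) <;> simp only [idxL, h] <;> split_ifs <;> omega
        have hB : idxG (sgB (i:ℕ)) (((i:ℕ)-1)/2) < 4*(N₂-2)+2 := by
          cases h : sgB (i:ℕ) <;> simp only [idxG, h] <;> split_ifs <;> omega
        simp only [if_neg hi0, if_pos hk, add_mul, Finset.sum_add_distrib]
        rw [fin_sum_single _ hA 2 (fun m : Fin (4*(N₂-2)+2) => O2 N₁ N₂ X Y (m:ℕ) z),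
          fin_sum_single _ hB (-4) (fun m : Fin (4*(N₂-2)+2) => O2 N₁ N₂ X Y (m:ℕ) z)]
        rw [P3, if_neg hi0, if_pos hk]
        simp only [idxL_sg, idxG_sg]
        ring
      · simp only [if_neg hi0, if_neg hk, zero_mul, Finset.sum_const_zero]
        rw [P3, if_neg hi0, if_neg hk]
        ring
  rw [s1, s2, s3]
  simp only [A4, Layer.apply, add_zero]
  rw [Fin.sum_univ_eq_sum_range (fun i =>
    (if i = 0 then (1:ℝ) else if (i-1)/2 < N₂-2 then (if (i-1)%2 = 0 then 1 else -1) else 0)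
      * O3 N₁ N₂ X Y i z) (8*(N₂-2)+2)]
  rw [← Finset.sum_subset (Finset.range_subset_range.2 (show 2*(N₂-2)+1 ≤ 8*(N₂-2)+2 by omega))
    (by
      intro i hi hni
      rw [Finset.mem_range] at hi
      rw [Finset.mem_range] at hni
      have h0 : i ≠ 0 := by omega
      have h1 : ¬((i-1)/2 < N₂-2) := by omega
      rw [if_neg h0, if_neg h1, zero_mul])]
  rw [Finset.sum_range_succ', sum_pair (N₂-2)]
  have hterm : ∀ k ∈ Finset.range (N₂-2),
      ((if 2*k+1 = 0 then (1:ℝ) else if (2*k+1-1)/2 < N₂-2 then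
          (if (2*k+1-1)%2 = 0 then 1 else -1) else 0) * O3 N₁ N₂ X Y (2*k+1) z
        + (if 2*k+1+1 = 0 then (1:ℝ) else if (2*k+1+1-1)/2 < N₂-2 then
          (if (2*k+1+1-1)%2 = 0 then 1 else -1) else 0) * O3 N₁ N₂ X Y (2*k+1+1) z)
      = O3 N₁ N₂ X Y (2*k+1) z - O3 N₁ N₂ X Y (2*k+2) z := by
    intro k hk
    rw [Finset.mem_range] at hk
    have e2 : 2*k+1+1 = 2*k+2 := by omega
    rw [e2]
    have d1 : 2*k+1 ≠ 0 := by omega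
    have d2 : (2*k+1-1)/2 = k := by omega
    have d3 : (2*k+1-1)%2 = 0 := by omega
    have d4 : 2*k+2 ≠ 0 := by omega
    have d5 : (2*k+2-1)/2 = k := by omega
    have d6 : (2*k+2-1)%2 = 1 := by omega
    rw [if_neg d1, if_neg d4, d2, d3, d5, d6, if_pos hk, if_pos hk, if_pos rfl,
      if_neg (by omega)]
    ring
  rw [Finset.sum_congr rfl hterm, GD]
  norm_num
  ring

end S18
namespace S18

open Finset

lemma ennnorm_le {w c : ℝ} (h : |w| ≤ c) : (‖w‖₊ : ℝ≥0∞) ≤ ENNReal.ofReal c := by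
  rw [← ENNReal.ofReal_coe_nnreal, coe_nnnorm, Real.norm_eq_abs]
  exact ENNReal.ofReal_le_ofReal h

lemma ennnorm_le_one {w : ℝ} (h : |w| ≤ 1) : (‖w‖₊ : ℝ≥0∞) ≤ 1 := by
  have h2 := ennnorm_le h
  rwa [ENNReal.ofReal_one] at h2

lemma bounded_mono {din dout : ℕ} (A : Layer din dout) {B C : ℝ≥0∞}
    (h : A.Bounded B) (hBC : B ≤ C) : A.Bounded C :=
  ⟨fun i j => le_trans (h.1 i j) hBC, fun i => le_trans (h.2 i) hBC⟩

section FinalBounds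
variable {N₁ N₂ : ℕ} {X Y : ℕ → ℝ} {δ : ℝ}

lemma A1_bounded1 (hX0 : ∀ n, 0 ≤ X n) (hX1 : ∀ n, X n ≤ 1) : (A1 N₁ N₂ X).Bounded 1 := by
  constructor
  · intro i j
    exact ennnorm_le_one (by norm_num [A1])
  · intro i
    apply ennnorm_le_one
    show |(-(KK N₂ X (i:ℕ)))| ≤ 1
    rw [abs_neg, KK, abs_le]
    exact ⟨by linarith [hX0 (kI N₂ (i:ℕ))], by linarith [hX1 (kI N₂ (i:ℕ))]⟩

lemma A4_bounded1 : (A4 N₂).Bounded 1 := by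
  constructor
  · intro i j
    apply ennnorm_le_one
    show |(if (j:ℕ) = 0 then (1:ℝ)
      else if ((j:ℕ)-1)/2 < N₂-2 then (if ((j:ℕ)-1) % 2 = 0 then 1 else -1) else 0)| ≤ 1
    split_ifs <;> norm_num
  · intro i
    apply ennnorm_le_one
    show |(0:ℝ)| ≤ 1
    norm_num

lemma A2_bounded (hN₁ : 2 ≤ N₁) (hN₂ : 2 ≤ N₂) (hδ : 0 < δ) (hδ1 : δ ≤ 1)
    (hmono : ∀ a b : ℕ, a ≤ b → X a ≤ X b)
    (hsep : ∀ n, n+1 < N₁*N₂ → X n + δ ≤ X (n+1))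
    (hX0 : ∀ n, 0 ≤ X n) (hX1 : ∀ n, X n ≤ 1)
    (hY0 : ∀ n, 0 ≤ Y n) (hY1 : ∀ n, Y n ≤ 1) :
    (A2 N₁ N₂ X Y).Bounded (ENNReal.ofReal (4/δ^2)) := by
  constructor
  · intro i m
    apply ennnorm_le
    have hmlt : (m:ℕ) < 2*N₁-1 := m.isLt
    exact F2_plc_bound hN₁ hN₂ hδ hδ1 hmono hsep hX0 hX1 hY0 hY1 (i:ℕ) (m:ℕ) (by omega)
  · intro i
    apply ennnorm_le
    have h := F2_val_bound hN₁ hN₂ hδ hδ1 hmono hsep hX0 hX1 hY0 hY1 (i:ℕ) 0 (by omega)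
    have h2 : 1/δ ≤ 4/δ^2 := by
      rw [div_le_div_iff₀ hδ (by positivity)]
      nlinarith
    show |F2 N₂ X Y (i:ℕ) 0| ≤ 4/δ^2
    linarith

lemma A3_bounded (hδ : 0 < δ) (hδ1 : δ ≤ 1) : (A3 N₂).Bounded (ENNReal.ofReal (4/δ^2)) := by
  have h4 : (4:ℝ) ≤ 4/δ^2 := by
    rw [le_div_iff₀ (by positivity)]
    nlinarith
  constructor
  · intro i m
    apply ennnorm_le
    show |(if (i:ℕ) = 0 then (if (m:ℕ) = 0 then (1:ℝ) else 0)
      else if ((i:ℕ)-1)/2 < N₂-2 then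
        ((if (m:ℕ) = idxL (sgB (i:ℕ)) (((i:ℕ)-1)/2) then 2 else 0)
          + (if (m:ℕ) = idxG (sgB (i:ℕ)) (((i:ℕ)-1)/2) then -4 else 0))
      else 0)| ≤ 4/δ^2
    split_ifs <;> norm_num <;> linarith
  · intro i
    apply ennnorm_le
    show |(0:ℝ)| ≤ 4/δ^2
    rw [abs_zero]
    positivity

end FinalBounds

end S18
/-- 1-D point fitting by a 3-hidden-layer ReLU network.
Given `N₁, N₂ ≥ 2`, `δ > 0` and points `{(x_i, y_i)}_{i=0}^{N₁N₂-1} ⊆ [0,1]²` with consecutive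
`x`'s at least `δ` apart, there is a ReLU network with layer widths
`(1, 2N₁-1, 4(N₂-2)+2, 8(N₂-2)+2, 1)`, all weights bounded by `4/δ²` (first and last affine
layers bounded by `1`), interpolating all points and linear on `[x_{i-1}, x_i]`
whenever `i ∉ {jN₂ : 1 ≤ j ≤ N₁-1}`. -/
theorem stmt18_point_fitting_1d (N₁ N₂ : ℕ) (hN₁ : 2 ≤ N₁) (hN₂ : 2 ≤ N₂)
    (δ : ℝ) (hδ : 0 < δ)
    (x y : Fin (N₁ * N₂) → ℝ)
    (hx : ∀ i, x i ∈ Set.Icc (0 : ℝ) 1) (hy : ∀ i, y i ∈ Set.Icc (0 : ℝ) 1)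
    (hsep : ∀ i j : Fin (N₁ * N₂), (i : ℕ) + 1 = (j : ℕ) → x i + δ ≤ x j) :
    ∃ (A₁ : Layer 1 (2 * N₁ - 1)) (A₂ : Layer (2 * N₁ - 1) (4 * (N₂ - 2) + 2))
      (A₃ : Layer (4 * (N₂ - 2) + 2) (8 * (N₂ - 2) + 2)) (A₄ : Layer (8 * (N₂ - 2) + 2) 1),
      A₁.Bounded (ENNReal.ofReal (4 / δ ^ 2)) ∧ A₂.Bounded (ENNReal.ofReal (4 / δ ^ 2)) ∧
      A₃.Bounded (ENNReal.ofReal (4 / δ ^ 2)) ∧ A₄.Bounded (ENNReal.ofReal (4 / δ ^ 2)) ∧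
      A₁.Bounded 1 ∧ A₄.Bounded 1 ∧
      ∀ gdag : ℝ → ℝ,
        (∀ z : ℝ, gdag z =
          A₄.apply (reluVec (A₃.apply (reluVec (A₂.apply (reluVec (A₁.apply fun _ => z)))))) 0) →
        (∀ i, gdag (x i) = y i) ∧
        (∀ i j : Fin (N₁ * N₂), (i : ℕ) + 1 = (j : ℕ) →
          (¬ ∃ k : ℕ, 1 ≤ k ∧ k ≤ N₁ - 1 ∧ (j : ℕ) = k * N₂) →
          ∃ a b : ℝ, ∀ z ∈ Set.Icc (x i) (x j), gdag z = a * z + b) := by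

  classical
  have hNN : 4 ≤ N₁ * N₂ := by
    calc 4 = 2*2 := rfl
    _ ≤ N₁ * N₂ := Nat.mul_le_mul hN₁ hN₂
  let X' : ℕ → ℝ := fun i => x ⟨min i (N₁*N₂-1), by omega⟩
  let Y' : ℕ → ℝ := fun i => y ⟨min i (N₁*N₂-1), by omega⟩
  have hXval : ∀ m : ℕ, ∀ hm : m < N₁*N₂, X' m = x ⟨m, hm⟩ := by
    intro m hm
    show x _ = x _
    congr 1
    exact Fin.ext (show min m (N₁*N₂-1) = m by omega)
  have hYval : ∀ m : ℕ, ∀ hm : m < N₁*N₂, Y' m = y ⟨m, hm⟩ := by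
    intro m hm
    show y _ = y _
    congr 1
    exact Fin.ext (show min m (N₁*N₂-1) = m by omega)
  have hXeq : ∀ i : Fin (N₁*N₂), X' (i:ℕ) = x i := by
    intro i
    rw [hXval _ i.isLt]
  have hYeq : ∀ i : Fin (N₁*N₂), Y' (i:ℕ) = y i := by
    intro i
    rw [hYval _ i.isLt]
  have hsep' : ∀ m, m+1 < N₁*N₂ → X' m + δ ≤ X' (m+1) := by
    intro m hm
    rw [hXval m (by omega), hXval (m+1) hm]
    exact hsep ⟨m, by omega⟩ ⟨m+1, hm⟩ rfl
  have hstep : ∀ m : ℕ, X' m ≤ X' (m+1) := by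
    intro m
    by_cases h : m+1 < N₁*N₂
    · linarith [hsep' m h, hδ.le]
    · have he : X' m = X' (m+1) := by
        show x _ = x _
        congr 1
        exact Fin.ext (show min m (N₁*N₂-1) = min (m+1) (N₁*N₂-1) by omega)
      exact le_of_eq he
  have hmono : ∀ a b : ℕ, a ≤ b → X' a ≤ X' b := fun a b h =>
    monotone_nat_of_le_succ hstep h
  have hX0 : ∀ n, 0 ≤ X' n := fun n => (hx _).1
  have hX1 : ∀ n, X' n ≤ 1 := fun n => (hx _).2
  have hY0 : ∀ n, 0 ≤ Y' n := fun n => (hy _).1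
  have hY1 : ∀ n, Y' n ≤ 1 := fun n => (hy _).2
  have hδ1 : δ ≤ 1 := by
    have h01 := hsep' 0 (by omega)
    have h2 := hX0 0
    have h3 := hX1 1
    linarith
  have hBig1 : (1:ℝ≥0∞) ≤ ENNReal.ofReal (4/δ^2) := by
    rw [← ENNReal.ofReal_one]
    apply ENNReal.ofReal_le_ofReal
    rw [le_div_iff₀ (by positivity)]
    nlinarith
  refine ⟨S18.A1 N₁ N₂ X', S18.A2 N₁ N₂ X' Y', S18.A3 N₂, S18.A4 N₂,
    S18.bounded_mono _ (S18.A1_bounded1 hX0 hX1) hBig1,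
    S18.A2_bounded hN₁ hN₂ hδ hδ1 hmono hsep' hX0 hX1 hY0 hY1,
    S18.A3_bounded hδ hδ1,
    S18.bounded_mono _ S18.A4_bounded1 hBig1,
    S18.A1_bounded1 hX0 hX1, S18.A4_bounded1, ?_⟩
  intro gdag hg
  have hgd : ∀ z, gdag z = S18.GD N₁ N₂ X' Y' z := by
    intro z
    rw [hg z]
    exact S18.net_eq N₁ N₂ X' Y' z
  have hN₂0 : 0 < N₂ := by omega
  constructor
  · intro i
    have hii : (i:ℕ) < N₁*N₂ := i.isLt
    have e : ((i:ℕ)/N₂)*N₂ + (i:ℕ)%N₂ = (i:ℕ) := by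
      rw [mul_comm]
      exact Nat.div_add_mod _ _
    have hjlt : (i:ℕ)/N₂ < N₁ := by
      rw [Nat.div_lt_iff_lt_mul hN₂0]
      exact hii
    have htlt : (i:ℕ)%N₂ < N₂ := Nat.mod_lt _ hN₂0
    have h := S18.GD_interp hN₁ hN₂ hδ hmono hsep' hY0 hY1 ((i:ℕ)/N₂) ((i:ℕ)%N₂) hjlt htlt
    rw [e] at h
    rw [hgd, ← hXeq i, h, hYeq i]
  · intro i j hij hns
    have hii : (i:ℕ) < N₁*N₂ := i.isLt
    have hjj : (j:ℕ) < N₁*N₂ := j.isLt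
    obtain ⟨jq, t, he, hjlt, htlt⟩ :
        ∃ jq t, jq*N₂ + t = (i:ℕ) ∧ jq < N₁ ∧ t < N₂ := by
      refine ⟨(i:ℕ)/N₂, (i:ℕ)%N₂, ?_, ?_, Nat.mod_lt _ hN₂0⟩
      · rw [mul_comm]
        exact Nat.div_add_mod _ _
      · rw [Nat.div_lt_iff_lt_mul hN₂0]
        exact hii
    have ht2 : t + 2 ≤ N₂ := by
      by_contra hcon
      have hsm : (jq+1)*N₂ = jq*N₂ + N₂ := by rw [Nat.succ_mul]
      have e2 : (j:ℕ) = (jq+1)*N₂ := by omega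
      have hklt : jq+1 < N₁ := by
        have hlt : (jq+1)*N₂ < N₁*N₂ := by omega
        exact Nat.lt_of_mul_lt_mul_right hlt
      exact hns ⟨jq+1, by omega, by omega, e2⟩
    obtain ⟨a, b, hab⟩ :=
      S18.GD_lin hN₁ hN₂ hδ hmono hsep' hY0 hY1 jq t hjlt ht2
    refine ⟨a, b, ?_⟩
    intro z hz
    rw [hgd]
    have eX1 : X' (jq*N₂ + t) = x i := by rw [he]; exact hXeq i
    have eX2 : X' (jq*N₂ + t+1) = x j := by
      have e3 : jq*N₂ + t+1 = (j:ℕ) := by omega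
      rw [e3]
      exact hXeq j
    exact hab z (by rw [eX1]; exact hz.1) (by rw [eX2]; exact hz.2)
end

section
/- Let d, N ∈ ℕ⁺, set K = ⌊N^{1/d}⌋², and let 𝓛 = {0,…,K−1}^d be an index set. For any tolerance Δ ∈ (0, 1/(3K)], define for each l ∈ 𝓛 the region Q_l(d,K,Δ) = { x = (x_1,…,x_d) : l_j/K ≤ x_j ≤ (l_j+1)/K − 1{l_j+1<K}·Δ for all j }. Then there exists a deep ReLU network g†: ℝ^d → ℝ^d with depth 3, width 16Nd, and all weights bounded in absolute value by 4Δ^{−2}, such that g†(x) = l/K for every x ∈ Q_l(d,K,Δ) and every l ∈ 𝓛. Moreover, the weights of the first and last affine layers are all bounded in absolute value by 1. -/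
open MeasureTheory ProbabilityTheory
open scoped ENNReal BigOperators

namespace Stmt19Aux

open Finset

noncomputable section

def e (N d : ℕ) : Fin (16*N) × Fin d ≃ Fin (16*N*d) := finProdFinEquiv

lemma stepSum (n aj : ℕ) (Δ x : ℝ) (θ : ℕ → ℝ) (hΔ : 0 < Δ)
    (h1 : ∀ i, i < n → i < aj → θ i ≤ x)
    (h2 : ∀ i, i < n → aj ≤ i → x ≤ θ i - Δ)
    (haj : aj ≤ n) :
    ∑ i ∈ Finset.range n, (max (x - θ i + Δ) 0 - max (x - θ i) 0) = Δ * aj := by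
  have key : ∀ i ∈ Finset.range n,
      max (x - θ i + Δ) 0 - max (x - θ i) 0 = if i < aj then Δ else 0 := by
    intro i hi
    rw [Finset.mem_range] at hi
    by_cases h : i < aj
    · have hx := h1 i hi h
      rw [if_pos h, max_eq_left (by linarith), max_eq_left (by linarith)]
      ring
    · have hx := h2 i hi (le_of_not_gt h)
      rw [if_neg h, max_eq_right (by linarith), max_eq_right (by linarith)]
      ring
  rw [Finset.sum_congr rfl key]
  rw [← Finset.sum_subset (Finset.range_subset_range.2 haj)
      (fun i _ hi => if_neg (by simpa using hi))]
  rw [Finset.sum_congr rfl (fun i hi => if_pos (Finset.mem_range.1 hi)),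
    Finset.sum_const, Finset.card_range, nsmul_eq_mul, mul_comm]

lemma sum_ite_Ico (n lo hi : ℕ) (h : hi ≤ n) (f : ℕ → ℝ) :
    ∑ m ∈ Finset.range n, (if lo ≤ m ∧ m < hi then f m else 0)
      = ∑ m ∈ Finset.Ico lo hi, f m := by
  rw [← Finset.sum_filter]
  congr 1
  ext m
  simp only [Finset.mem_filter, Finset.mem_range, Finset.mem_Ico]
  omega

lemma sum_delta (M m : ℕ) (hm : m < M) (v : Fin M → ℝ) :
    ∑ q : Fin M, (if (q:ℕ) = m then 1 else 0) * v q = v ⟨m, hm⟩ := by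
  rw [Finset.sum_eq_single (⟨m, hm⟩ : Fin M)]
  · simp
  · intro q _ hq
    rw [if_neg, zero_mul]
    exact fun h => hq (Fin.ext h)
  · simp

/-! ### Layers -/

def mkIn (N d : ℕ) (w bb : ℕ → ℝ) : Layer d (16*N*d) where
  W := fun i j' => if j' = ((e N d).symm i).2 then w (((e N d).symm i).1 : ℕ) else 0
  b := fun i => bb (((e N d).symm i).1 : ℕ)

lemma mkIn_apply (N d : ℕ) (w bb : ℕ → ℝ) (x : Fin d → ℝ) (p : Fin (16*N)) (j : Fin d) :
    (mkIn N d w bb).apply x (e N d (p, j)) = w p * x j + bb p := by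
  unfold mkIn Layer.apply
  simp [Equiv.symm_apply_apply, ite_mul, Finset.sum_ite_eq']

def mkMid (N d : ℕ) (w : ℕ → ℕ → ℝ) (bb : ℕ → ℝ) : Layer (16*N*d) (16*N*d) where
  W := fun i i' => if ((e N d).symm i').2 = ((e N d).symm i).2
      then w (((e N d).symm i).1 : ℕ) (((e N d).symm i').1 : ℕ) else 0
  b := fun i => bb (((e N d).symm i).1 : ℕ)

lemma mkMid_apply (N d : ℕ) (w : ℕ → ℕ → ℝ) (bb : ℕ → ℝ) (v : Fin (16*N*d) → ℝ)
    (p : Fin (16*N)) (j : Fin d) :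
    (mkMid N d w bb).apply v (e N d (p, j))
      = (∑ q : Fin (16*N), w p q * v (e N d (q, j))) + bb p := by
  unfold mkMid Layer.apply
  simp only [Equiv.symm_apply_apply]
  congr 1
  have h := Fintype.sum_equiv (e N d)
    (fun z => (if ((e N d).symm ((e N d) z)).2 = j
        then w p (((e N d).symm ((e N d) z)).1 : ℕ) else 0) * v ((e N d) z))
    (fun i' => (if ((e N d).symm i').2 = j then w p (((e N d).symm i').1 : ℕ) else 0) * v i')
    (fun z => rfl)
  rw [← h, Fintype.sum_prod_type]
  refine Finset.sum_congr rfl fun q _ => ?_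
  simp [Equiv.symm_apply_apply, ite_mul, Finset.sum_ite_eq']

def mkOut (N d : ℕ) : Layer (16*N*d) d where
  W := fun j i' => if ((e N d).symm i').2 = j ∧ (((e N d).symm i').1 : ℕ) = 0 then 1 else 0
  b := fun _ => 0

lemma mkOut_apply (N d : ℕ) (h0 : 0 < 16*N) (v : Fin (16*N*d) → ℝ) (j : Fin d) :
    (mkOut N d).apply v j = v (e N d (⟨0, h0⟩, j)) := by
  unfold mkOut Layer.apply
  have h := Fintype.sum_equiv (e N d)
    (fun z => (if ((e N d).symm ((e N d) z)).2 = j ∧ (((e N d).symm ((e N d) z)).1 : ℕ) = 0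
        then (1:ℝ) else 0) * v ((e N d) z))
    (fun i' => (if ((e N d).symm i').2 = j ∧ (((e N d).symm i').1 : ℕ) = 0 then (1:ℝ) else 0)
        * v i')
    (fun z => rfl)
  rw [← h, Fintype.sum_prod_type]
  simp only [Equiv.symm_apply_apply, add_zero]
  have : ∀ q : Fin (16*N), ∑ j' : Fin d,
      (if j' = j ∧ (q:ℕ) = 0 then (1:ℝ) else 0) * v ((e N d) (q, j'))
      = (if (q:ℕ) = 0 then 1 else 0) * v ((e N d) (q, j)) := by
    intro q
    by_cases hq : (q:ℕ) = 0
    · simp only [hq, and_true, if_true]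
      simp [ite_mul, Finset.sum_ite_eq']
    · simp [hq]
  rw [Finset.sum_congr rfl (fun q _ => this q), sum_delta (16*N) 0 h0]

end

end Stmt19Aux
namespace Stmt19Aux

noncomputable section

/-! ### Concrete weights -/

/-- Bias of the input layer. -/
def b0f (k : ℕ) (Δ : ℝ) (p : ℕ) : ℝ :=
  if p = 0 then 0
  else if p < k then Δ - (p:ℝ)/k
  else if p < 2*k-1 then -(((p-k+1 : ℕ):ℝ)/k)
  else 0

/-- Coefficient pattern of the coarse step units. -/
def s (k q : ℕ) : ℝ := if 1 ≤ q ∧ q < k then 1 else if k ≤ q ∧ q < 2*k-1 then -1 else 0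

/-- Coefficient pattern of the fine step units. -/
def t (k q : ℕ) : ℝ := if 2 ≤ q ∧ q < k+1 then 1 else if k+1 ≤ q ∧ q < 2*k then -1 else 0

def c00 (k p : ℕ) : ℝ := if p = 0 then 1 else if p = 1 then 0 else if p < 2*k then 1 else 0

def cS (k : ℕ) (Δ : ℝ) (p : ℕ) : ℝ :=
  if p = 0 then 0 else if p = 1 then 1/(k*Δ) else if p < 2*k then -(1/(k*Δ)) else 0

def b1f (k : ℕ) (Δ : ℝ) (p : ℕ) : ℝ :=
  if p ≤ 1 then 0
  else if p < k+1 then Δ - ((p-1 : ℕ):ℝ)/(k:ℝ)^2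
  else if p < 2*k then -(((p-k : ℕ):ℝ)/(k:ℝ)^2)
  else 0

def w1 (k : ℕ) (Δ : ℝ) (p q : ℕ) : ℝ :=
  c00 k p * (if q = 0 then 1 else 0) + cS k Δ p * s k q

def w2 (k : ℕ) (Δ : ℝ) (p q : ℕ) : ℝ :=
  (if p = 0 then 1 else 0) * (if q = 1 then 1 else 0)
    + (if p = 0 then 1/((k:ℝ)^2*Δ) else 0) * t k q

lemma sum_w1 (M k : ℕ) (Δ : ℝ) (h0 : 0 < M) (p : ℕ) (v : Fin M → ℝ) :
    ∑ q : Fin M, w1 k Δ p (q:ℕ) * v q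
      = c00 k p * v ⟨0, h0⟩ + cS k Δ p * ∑ q : Fin M, s k (q:ℕ) * v q := by
  have hterm : ∀ q : Fin M, w1 k Δ p (q:ℕ) * v q
      = c00 k p * ((if (q:ℕ) = 0 then 1 else 0) * v q) + cS k Δ p * (s k (q:ℕ) * v q) := by
    intro q; unfold w1; ring
  rw [Finset.sum_congr rfl (fun q _ => hterm q), Finset.sum_add_distrib,
    ← Finset.mul_sum, ← Finset.mul_sum, sum_delta M 0 h0]

lemma sum_w2 (M k : ℕ) (Δ : ℝ) (h1 : 1 < M) (p : ℕ) (v : Fin M → ℝ) :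
    ∑ q : Fin M, w2 k Δ p (q:ℕ) * v q
      = (if p = 0 then 1 else 0) * v ⟨1, h1⟩
        + (if p = 0 then 1/((k:ℝ)^2*Δ) else 0) * ∑ q : Fin M, t k (q:ℕ) * v q := by
  have hterm : ∀ q : Fin M, w2 k Δ p (q:ℕ) * v q
      = (if p = 0 then 1 else 0) * ((if (q:ℕ) = 1 then 1 else 0) * v q)
        + (if p = 0 then 1/((k:ℝ)^2*Δ) else 0) * (t k (q:ℕ) * v q) := by
    intro q; unfold w2; ring
  rw [Finset.sum_congr rfl (fun q _ => hterm q), Finset.sum_add_distrib,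
    ← Finset.mul_sum, ← Finset.mul_sum, sum_delta M 1 h1]

/-! ### hidden values -/

def V1 (k : ℕ) (Δ xj : ℝ) (m : ℕ) : ℝ :=
  if m = 0 then max xj 0
  else if m < k then max (xj - (m:ℝ)/k + Δ) 0
  else if m < 2*k-1 then max (xj - ((m-k+1 : ℕ):ℝ)/k) 0
  else 0

def V2 (k : ℕ) (Δ xj c : ℝ) (m : ℕ) : ℝ :=
  if m = 0 then max xj 0
  else if m = 1 then max c 0
  else if m < k+1 then max (xj - c - ((m-1 : ℕ):ℝ)/(k:ℝ)^2 + Δ) 0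
  else if m < 2*k then max (xj - c - ((m-k : ℕ):ℝ)/(k:ℝ)^2) 0
  else 0

/-! ### norm bound helpers -/

lemma nnnorm_le_ofReal {r B : ℝ} (h : |r| ≤ B) : (‖r‖₊ : ℝ≥0∞) ≤ ENNReal.ofReal B := by
  rw [← enorm_eq_nnnorm, ← ofReal_norm, Real.norm_eq_abs]
  exact ENNReal.ofReal_le_ofReal h

lemma nnnorm_le_one {r : ℝ} (h : |r| ≤ 1) : (‖r‖₊ : ℝ≥0∞) ≤ 1 := by
  rw [← enorm_eq_nnnorm, ← ofReal_norm, Real.norm_eq_abs, ← ENNReal.ofReal_one]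
  exact ENNReal.ofReal_le_ofReal h

lemma Bounded_mono {din dout : ℕ} {A : Layer din dout} {B B' : ℝ≥0∞}
    (h : A.Bounded B) (hBB : B ≤ B') : A.Bounded B' :=
  ⟨fun i j => (h.1 i j).trans hBB, fun i => (h.2 i).trans hBB⟩

end

end Stmt19Aux
namespace Stmt19Aux

noncomputable section

variable {k : ℕ} {Δ : ℝ}

lemma key_ineq (hk : 1 ≤ k) (hΔ : 0 < Δ) (hΔ3 : Δ ≤ 1/3) {c : ℝ} (hc : (k:ℝ) ≤ c)
    (hc' : 0 < c) : 1 + 1/(c*Δ) ≤ 4/Δ^2 := by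
  have hk1 : (1:ℝ) ≤ k := by exact_mod_cast hk
  have h1 : 1/(c*Δ) ≤ 1/Δ := by
    apply one_div_le_one_div_of_le hΔ
    nlinarith
  have h2 : 1 + 1/Δ ≤ 4/Δ^2 := by
    rw [le_div_iff₀ (by positivity)]
    have : (1 + 1/Δ)*Δ^2 = Δ^2 + Δ := by field_simp
    rw [this]
    nlinarith
  linarith

lemma abs_s (q : ℕ) : |s k q| ≤ 1 := by
  unfold s; split_ifs <;> norm_num

lemma abs_t (q : ℕ) : |t k q| ≤ 1 := by
  unfold t; split_ifs <;> norm_num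

lemma abs_c00 (p : ℕ) : |c00 k p| ≤ 1 := by
  unfold c00; split_ifs <;> norm_num

lemma abs_cS (hk : 1 ≤ k) (hΔ : 0 < Δ) (p : ℕ) : |cS k Δ p| ≤ 1/((k:ℝ)*Δ) := by
  have hk0 : (0:ℝ) < k := by exact_mod_cast hk
  unfold cS
  split_ifs
  · simp; positivity
  · rw [abs_of_nonneg (by positivity)]
  · rw [abs_neg, abs_of_nonneg (by positivity)]
  · simp; positivity

lemma abs_b0f (hk : 1 ≤ k) (hΔ : 0 < Δ) (hΔ3 : Δ ≤ 1/3) (p : ℕ) : |b0f k Δ p| ≤ 1 := by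
  have hk0 : (0:ℝ) < k := by exact_mod_cast hk
  unfold b0f
  split_ifs with h0 h1 h2
  · norm_num
  · have hp : (p:ℝ) ≤ k := by exact_mod_cast Nat.le_of_lt h1
    have hp0 : (0:ℝ) ≤ (p:ℝ)/k := by positivity
    have hp1 : (p:ℝ)/k ≤ 1 := by rw [div_le_one hk0]; exact hp
    rw [abs_le]; constructor <;> linarith
  · have hp : ((p-k+1 : ℕ):ℝ) ≤ k := by exact_mod_cast (by omega : p-k+1 ≤ k)
    have hp0 : (0:ℝ) ≤ ((p-k+1 : ℕ):ℝ)/k := by positivity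
    have hp1 : ((p-k+1 : ℕ):ℝ)/k ≤ 1 := by rw [div_le_one hk0]; exact hp
    rw [abs_neg, abs_le]; constructor <;> linarith
  · norm_num

lemma abs_b1f (hk : 1 ≤ k) (hΔ : 0 < Δ) (hΔ3 : Δ ≤ 1/3) (p : ℕ) : |b1f k Δ p| ≤ 1 := by
  have hk0 : (0:ℝ) < k := by exact_mod_cast hk
  have hkk : (0:ℝ) < (k:ℝ)^2 := by positivity
  unfold b1f
  split_ifs with h0 h1 h2
  · norm_num
  · have hp : ((p-1 : ℕ):ℝ) ≤ (k:ℝ)^2 := by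
      have hkk2 : k ≤ k^2 := by nlinarith
      have : p - 1 ≤ k^2 := by omega
      calc ((p-1:ℕ):ℝ) ≤ ((k^2:ℕ):ℝ) := by exact_mod_cast this
        _ = (k:ℝ)^2 := by push_cast; ring
    have hp0 : (0:ℝ) ≤ ((p-1 : ℕ):ℝ)/(k:ℝ)^2 := by positivity
    have hp1 : ((p-1 : ℕ):ℝ)/(k:ℝ)^2 ≤ 1 := by rw [div_le_one hkk]; exact hp
    rw [abs_le]; constructor <;> linarith
  · have hkk2 : k ≤ k^2 := by nlinarith
    have : p - k ≤ k^2 := by omega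
    have hp : ((p-k : ℕ):ℝ) ≤ (k:ℝ)^2 := by
      calc ((p-k:ℕ):ℝ) ≤ ((k^2:ℕ):ℝ) := by exact_mod_cast this
        _ = (k:ℝ)^2 := by push_cast; ring
    have hp0 : (0:ℝ) ≤ ((p-k : ℕ):ℝ)/(k:ℝ)^2 := by positivity
    have hp1 : ((p-k : ℕ):ℝ)/(k:ℝ)^2 ≤ 1 := by rw [div_le_one hkk]; exact hp
    rw [abs_neg, abs_le]; constructor <;> linarith
  · norm_num

lemma abs_w1 (hk : 1 ≤ k) (hΔ : 0 < Δ) (hΔ3 : Δ ≤ 1/3) (p q : ℕ) :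
    |w1 k Δ p q| ≤ 4/Δ^2 := by
  have hk0 : (0:ℝ) < k := by exact_mod_cast hk
  have h1 : |c00 k p * (if q = 0 then 1 else 0)| ≤ 1 := by
    rw [abs_mul]
    calc |c00 k p| * |if q = 0 then (1:ℝ) else 0| ≤ 1 * 1 := by
          apply mul_le_mul (abs_c00 p) _ (abs_nonneg _) zero_le_one
          split_ifs <;> norm_num
      _ = 1 := by norm_num
  have h2 : |cS k Δ p * s k q| ≤ 1/((k:ℝ)*Δ) := by
    rw [abs_mul]
    calc |cS k Δ p| * |s k q| ≤ (1/((k:ℝ)*Δ)) * 1 := by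
          apply mul_le_mul (abs_cS hk hΔ p) (abs_s q) (abs_nonneg _) (by positivity)
      _ = 1/((k:ℝ)*Δ) := by norm_num
  calc |w1 k Δ p q| ≤ |c00 k p * (if q = 0 then 1 else 0)| + |cS k Δ p * s k q| :=
        abs_add_le _ _
    _ ≤ 1 + 1/((k:ℝ)*Δ) := by linarith
    _ ≤ 4/Δ^2 := key_ineq hk hΔ hΔ3 le_rfl hk0

lemma abs_w2 (hk : 1 ≤ k) (hΔ : 0 < Δ) (hΔ3 : Δ ≤ 1/3) (p q : ℕ) :
    |w2 k Δ p q| ≤ 4/Δ^2 := by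
  have hk0 : (0:ℝ) < k := by exact_mod_cast hk
  have hk1 : (1:ℝ) ≤ k := by exact_mod_cast hk
  have hkk : (k:ℝ) ≤ (k:ℝ)^2 := by nlinarith
  have h1 : |(if p = 0 then (1:ℝ) else 0) * (if q = 1 then (1:ℝ) else 0)| ≤ 1 := by
    rw [abs_mul]
    calc _ ≤ 1*1 := by
          apply mul_le_mul _ _ (abs_nonneg _) zero_le_one <;> split_ifs <;> norm_num
      _ = (1:ℝ) := by norm_num
  have h2 : |(if p = 0 then 1/((k:ℝ)^2*Δ) else 0) * t k q| ≤ 1/((k:ℝ)^2*Δ) := by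
    rw [abs_mul]
    calc _ ≤ (1/((k:ℝ)^2*Δ)) * 1 := by
          apply mul_le_mul _ (abs_t q) (abs_nonneg _) (by positivity)
          split_ifs
          · rw [abs_of_nonneg (by positivity)]
          · simp; positivity
      _ = 1/((k:ℝ)^2*Δ) := by norm_num
  calc |w2 k Δ p q| ≤ _ + _ := abs_add_le _ _
    _ ≤ 1 + 1/((k:ℝ)^2*Δ) := by linarith
    _ ≤ 4/Δ^2 := key_ineq hk hΔ hΔ3 hkk (by positivity)

end

end Stmt19Aux
open Stmt19Aux in
set_option maxHeartbeats 1600000 in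
/-- index creation on the `d`-dimensional unit cube.
With `K = ⌊N^{1/d}⌋²` and tolerance `Δ ∈ (0, 1/(3K)]`, there is a depth-3 ReLU network
`g† : ℝ^d → ℝ^d` of width `16Nd` with all weights bounded by `4Δ⁻²` (first and last affine
layers bounded by `1`) such that `g†(x) = l/K` for every `x` in the region `Q_l(d,K,Δ)`
and every index `l ∈ {0,…,K-1}^d`. -/
theorem stmt19_index_creation (d N : ℕ) (hd : 0 < d) (hN : 0 < N)
    (K : ℕ) (hK : K = (Nat.floor ((N : ℝ) ^ ((d : ℝ)⁻¹))) ^ 2)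
    (Δ : ℝ) (hΔpos : 0 < Δ) (hΔle : Δ ≤ 1 / (3 * (K : ℝ))) :
    ∃ (A₀ : Layer d (16 * N * d)) (A₁ A₂ : Layer (16 * N * d) (16 * N * d))
      (A₃ : Layer (16 * N * d) d),
      A₀.Bounded (ENNReal.ofReal (4 / Δ ^ 2)) ∧ A₁.Bounded (ENNReal.ofReal (4 / Δ ^ 2)) ∧
      A₂.Bounded (ENNReal.ofReal (4 / Δ ^ 2)) ∧ A₃.Bounded (ENNReal.ofReal (4 / Δ ^ 2)) ∧
      A₀.Bounded 1 ∧ A₃.Bounded 1 ∧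
      ∀ (l : Fin d → ℕ), (∀ j, l j < K) →
        ∀ x : Fin d → ℝ,
          (∀ j, (l j : ℝ) / K ≤ x j ∧
              x j ≤ ((l j : ℝ) + 1) / K - (if l j + 1 < K then Δ else 0)) →
          A₃.apply (reluVec (A₂.apply (reluVec (A₁.apply (reluVec (A₀.apply x))))))
            = fun j => (l j : ℝ) / K := by
  classical
  obtain ⟨k, hk1, hkN, hKk2⟩ : ∃ k : ℕ, 1 ≤ k ∧ k ≤ N ∧ K = k^2 := by
    refine ⟨Nat.floor ((N : ℝ) ^ ((d : ℝ)⁻¹)), ?_, ?_, hK⟩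
    · exact Nat.le_floor (by
        have : (1:ℝ) ≤ (N : ℝ) ^ ((d : ℝ)⁻¹) :=
          Real.one_le_rpow (by exact_mod_cast hN) (by positivity)
        exact_mod_cast this)
    · have hdi : ((d:ℝ))⁻¹ ≤ 1 := by
        rw [← one_div]
        apply div_le_one_of_le₀
        · exact_mod_cast hd
        · positivity
      have h1 : (N : ℝ) ^ ((d : ℝ)⁻¹) ≤ (N : ℝ) ^ (1:ℝ) :=
        Real.rpow_le_rpow_of_exponent_le (by exact_mod_cast hN) hdi
      calc Nat.floor ((N : ℝ) ^ ((d : ℝ)⁻¹)) ≤ Nat.floor ((N : ℝ) ^ (1:ℝ)) :=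
            Nat.floor_le_floor h1
        _ = N := by rw [Real.rpow_one, Nat.floor_natCast]
  have hk0R : (0:ℝ) < k := by exact_mod_cast hk1
  have hKR : (K:ℝ) = (k:ℝ)^2 := by rw [hKk2]; push_cast; ring
  have hK1 : 1 ≤ K := by rw [hKk2]; nlinarith
  have hKpos : (0:ℝ) < K := by rw [hKR]; positivity
  have hΔ3 : Δ ≤ 1/3 := by
    have h3 : (3:ℝ) ≤ 3*K := by nlinarith [show (1:ℝ) ≤ K by exact_mod_cast hK1]
    have := one_div_le_one_div_of_le (by norm_num : (0:ℝ) < 3) h3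
    linarith
  have hB1 : (1:ℝ) ≤ 4/Δ^2 := by
    rw [le_div_iff₀ (by positivity)]; nlinarith
  have h16 : 0 < 16*N := by omega
  have h16' : 1 < 16*N := by omega
  set A0 : Layer d (16*N*d) :=
    mkIn N d (fun p => if p < 2*k-1 then (1:ℝ) else 0) (b0f k Δ) with hA0
  set A1 : Layer (16*N*d) (16*N*d) := mkMid N d (w1 k Δ) (b1f k Δ) with hA1
  set A2 : Layer (16*N*d) (16*N*d) := mkMid N d (w2 k Δ) (fun _ => 0) with hA2
  set A3 : Layer (16*N*d) d := mkOut N d with hA3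
  have bA0 : A0.Bounded 1 := by
    constructor
    · intro i j'
      apply nnnorm_le_one
      rw [hA0]; unfold mkIn
      simp only
      split_ifs <;> norm_num
    · intro i
      apply nnnorm_le_one
      exact abs_b0f hk1 hΔpos hΔ3 _
  have bA3 : A3.Bounded 1 := by
    constructor
    · intro i j'
      apply nnnorm_le_one
      rw [hA3]; unfold mkOut
      simp only
      split_ifs <;> norm_num
    · intro i
      apply nnnorm_le_one
      simp [hA3, mkOut]
  have bA1 : A1.Bounded (ENNReal.ofReal (4 / Δ ^ 2)) := by
    constructor
    · intro i j'
      apply nnnorm_le_ofReal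
      rw [hA1]; unfold mkMid
      simp only
      split_ifs
      · exact abs_w1 hk1 hΔpos hΔ3 _ _
      · rw [abs_zero]; positivity
    · intro i
      apply nnnorm_le_ofReal
      exact le_trans (abs_b1f hk1 hΔpos hΔ3 _) hB1
  have bA2 : A2.Bounded (ENNReal.ofReal (4 / Δ ^ 2)) := by
    constructor
    · intro i j'
      apply nnnorm_le_ofReal
      rw [hA2]; unfold mkMid
      simp only
      split_ifs
      · exact abs_w2 hk1 hΔpos hΔ3 _ _
      · rw [abs_zero]; positivity
    · intro i
      apply nnnorm_le_ofReal
      rw [hA2]; unfold mkMid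
      simp only [abs_zero]
      positivity
  have hole : (1:ℝ≥0∞) ≤ ENNReal.ofReal (4 / Δ ^ 2) := ENNReal.one_le_ofReal.mpr hB1
  refine ⟨A0, A1, A2, A3, Bounded_mono bA0 hole, bA1, bA2, Bounded_mono bA3 hole,
    bA0, bA3, ?_⟩
  intro l hl x hx
  funext j
  obtain ⟨hxlo, hxhi⟩ := hx j
  have hx0 : 0 ≤ x j := le_trans (by positivity) hxlo
  set a := l j / k with ha_def
  set bf := l j % k with hbf_def
  have hab : k * a + bf = l j := Nat.div_add_mod (l j) k
  have hbfk : bf < k := Nat.mod_lt _ (by omega)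
  have hak : a < k := by
    rw [ha_def, Nat.div_lt_iff_lt_mul (by omega : 0 < k)]
    have h := hl j; rw [hKk2, pow_two] at h; exact h
  have habR : (k:ℝ) * a + bf = l j := by exact_mod_cast hab
  have hcsum : (a:ℝ)/k + (bf:ℝ)/(k:ℝ)^2 = (l j:ℝ)/K := by
    have h1 : (a:ℝ)/k + (bf:ℝ)/(k:ℝ)^2 = ((k:ℝ)*a + bf)/(k:ℝ)^2 := by
      field_simp
    rw [h1, habR, hKR]
  have hedge : ¬ (l j + 1 < K) → a = k - 1 ∧ bf = k - 1 := by
    intro h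
    obtain ⟨m, rfl⟩ : ∃ m, k = m + 1 := ⟨k - 1, by omega⟩
    have hK' : K = (m+1)*m + m + 1 := by rw [hKk2]; ring
    have hljm : l j = (m+1)*m + m := by
      have := hl j; omega
    constructor
    · rw [ha_def, hljm, Nat.mul_add_div (by omega), Nat.div_eq_of_lt (by omega)]
      omega
    · rw [hbf_def, hljm, Nat.mul_add_mod, Nat.mod_eq_of_lt (by omega)]
      omega
  -- hidden layer 1 values
  have hv1 : ∀ q : Fin (16*N), reluVec (A0.apply x) (e N d (q, j))
      = V1 k Δ (x j) (q:ℕ) := by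
    intro q
    show max (A0.apply x (e N d (q, j))) 0 = _
    rw [hA0, mkIn_apply]
    unfold V1 b0f
    split_ifs <;>
      first
        | omega
        | (congr 1; ring1)
        | (simp only [zero_mul, one_mul, mul_zero, zero_add, add_zero]; exact max_self 0)
  -- coarse step sum
  have h1c : ∀ i, i < k-1 → i < a → ((1+i:ℕ):ℝ)/k ≤ x j := by
    intro i _ hia
    have h1' : ((1+i:ℕ):ℝ) ≤ (a:ℝ) := by exact_mod_cast (by omega : 1+i ≤ a)
    have h2' : (a:ℝ)/k ≤ (l j:ℝ)/K := by
      rw [hKR, div_le_div_iff₀ hk0R (by positivity)]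
      nlinarith [habR, Nat.cast_nonneg (α := ℝ) bf, hk0R]
    calc ((1+i:ℕ):ℝ)/k ≤ (a:ℝ)/k := by gcongr
      _ ≤ (l j:ℝ)/K := h2'
      _ ≤ x j := hxlo
  have h2c : ∀ i, i < k-1 → a ≤ i → x j ≤ ((1+i:ℕ):ℝ)/k - Δ := by
    intro i hik hai
    by_cases hlK : l j + 1 < K
    · have hxh : x j ≤ ((l j:ℝ)+1)/K - Δ := by
        have h := hxhi; rw [if_pos hlK] at h; exact h
      have hn : l j + 1 ≤ (1+i)*k := by
        calc l j + 1 = k*a + bf + 1 := by omega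
          _ ≤ k*a + k := by omega
          _ = k*(a+1) := by ring
          _ ≤ k*(1+i) := Nat.mul_le_mul_left k (by omega)
          _ = (1+i)*k := by ring
      have hmono : ((l j:ℝ)+1)/K ≤ ((1+i:ℕ):ℝ)/k := by
        rw [hKR, div_le_div_iff₀ (by positivity) hk0R]
        have hnR : ((l j:ℝ)+1) ≤ ((1+i:ℕ):ℝ)*k := by exact_mod_cast hn
        nlinarith [hk0R]
      linarith
    · obtain ⟨ha', _⟩ := hedge hlK
      omega
  have hS : ∑ q : Fin (16*N), s k (q:ℕ) * reluVec (A0.apply x) (e N d (q, j)) = Δ * a := by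
    have hterm : ∀ q : Fin (16*N), s k (q:ℕ) * reluVec (A0.apply x) (e N d (q, j))
        = (if 1 ≤ (q:ℕ) ∧ (q:ℕ) < k then max (x j - ((q:ℕ):ℝ)/k + Δ) 0 else 0)
          + (if k ≤ (q:ℕ) ∧ (q:ℕ) < 2*k-1
              then -max (x j - (((q:ℕ)-k+1 : ℕ):ℝ)/k) 0 else 0) := by
      intro q
      rw [hv1 q]
      unfold s V1
      split_ifs <;> first | omega | ring1
    rw [Finset.sum_congr rfl (fun q _ => hterm q)]
    rw [Fin.sum_univ_eq_sum_range (fun m =>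
      (if 1 ≤ m ∧ m < k then max (x j - (m:ℝ)/k + Δ) 0 else 0)
        + (if k ≤ m ∧ m < 2*k-1 then -max (x j - ((m-k+1 : ℕ):ℝ)/k) 0 else 0)) (16*N)]
    rw [Finset.sum_add_distrib,
      sum_ite_Ico (16*N) 1 k (by omega) _,
      sum_ite_Ico (16*N) k (2*k-1) (by omega) _,
      Finset.sum_Ico_eq_sum_range (fun m => max (x j - (m:ℝ)/k + Δ) 0) 1 k,
      Finset.sum_Ico_eq_sum_range (fun m => -max (x j - ((m-k+1 : ℕ):ℝ)/k) 0) k (2*k-1)]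
    rw [show 2*k-1-k = k-1 by omega]
    rw [Finset.sum_neg_distrib, ← sub_eq_add_neg, ← Finset.sum_sub_distrib]
    have hfix : ∀ i ∈ Finset.range (k-1),
        max (x j - ((1+i : ℕ):ℝ)/k + Δ) 0 - max (x j - ((k+i-k+1 : ℕ):ℝ)/k) 0
          = max (x j - ((1+i : ℕ):ℝ)/k + Δ) 0 - max (x j - ((1+i : ℕ):ℝ)/k) 0 := by
      intro i _
      rw [show k+i-k+1 = 1+i by omega]
    rw [Finset.sum_congr rfl hfix]
    exact stepSum (k-1) a Δ (x j) (fun i => ((1+i:ℕ):ℝ)/k) hΔpos h1c h2c (by omega)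
  have hkne : (k:ℝ) ≠ 0 := ne_of_gt hk0R
  have hΔne : Δ ≠ 0 := ne_of_gt hΔpos
  have hmagic : ∀ (c z : ℝ), 1/(c*Δ)*(Δ*z) = z/c := by
    intro c z
    rw [one_div_mul_eq_div, mul_comm c Δ, mul_div_mul_left _ _ hΔne]
  -- hidden layer 2 values
  have hv2 : ∀ q : Fin (16*N), reluVec (A1.apply (reluVec (A0.apply x))) (e N d (q, j))
      = V2 k Δ (x j) ((a:ℝ)/k) (q:ℕ) := by
    intro q
    show max (A1.apply (reluVec (A0.apply x)) (e N d (q, j))) 0 = _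
    rw [hA1, mkMid_apply]
    simp only [sum_w1 (16*N) k Δ h16]
    rw [hv1 ⟨0, h16⟩, hS]
    rw [show ((⟨0,h16⟩ : Fin (16*N)):ℕ) = 0 from rfl]
    have hV10 : V1 k Δ (x j) 0 = x j := by
      unfold V1; rw [if_pos rfl]; exact max_eq_left hx0
    rw [hV10]
    unfold V2 c00 cS b1f
    split_ifs <;>
      first
        | omega
        | (congr 1; ring1)
        | (congr 1; rw [hmagic]; ring1)
        | (congr 1; rw [neg_mul, hmagic]; ring1)
        | (simp only [zero_mul, one_mul, mul_zero, zero_add, add_zero]; exact max_self 0)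
  -- fine step sum
  have h1f : ∀ i, i < k-1 → i < bf → ((1+i:ℕ):ℝ)/(k:ℝ)^2 ≤ x j - (a:ℝ)/k := by
    intro i _ hib
    have h1' : ((1+i:ℕ):ℝ) ≤ (bf:ℝ) := by exact_mod_cast (by omega : 1+i ≤ bf)
    have h2' : (a:ℝ)/k + (bf:ℝ)/(k:ℝ)^2 ≤ x j := by rw [hcsum]; exact hxlo
    have h3' : ((1+i:ℕ):ℝ)/(k:ℝ)^2 ≤ (bf:ℝ)/(k:ℝ)^2 := by gcongr
    linarith
  have h2f : ∀ i, i < k-1 → bf ≤ i → x j - (a:ℝ)/k ≤ ((1+i:ℕ):ℝ)/(k:ℝ)^2 - Δ := by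
    intro i hik hbi
    by_cases hlK : l j + 1 < K
    · have hxh : x j ≤ ((l j:ℝ)+1)/K - Δ := by
        have h := hxhi; rw [if_pos hlK] at h; exact h
      have hsplit : ((l j:ℝ)+1)/K = (a:ℝ)/k + (bf:ℝ)/(k:ℝ)^2 + 1/(k:ℝ)^2 := by
        rw [add_div, hcsum, hKR]
      have h1' : (bf:ℝ) + 1 ≤ ((1+i:ℕ):ℝ) := by exact_mod_cast (by omega : bf+1 ≤ 1+i)
      have h3' : ((bf:ℝ)+1)/(k:ℝ)^2 ≤ ((1+i:ℕ):ℝ)/(k:ℝ)^2 := by gcongr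
      rw [add_div] at h3'
      linarith
    · obtain ⟨_, hb'⟩ := hedge hlK
      omega
  have hT : ∑ q : Fin (16*N), t k (q:ℕ) *
      reluVec (A1.apply (reluVec (A0.apply x))) (e N d (q, j)) = Δ * bf := by
    have hterm : ∀ q : Fin (16*N), t k (q:ℕ) *
        reluVec (A1.apply (reluVec (A0.apply x))) (e N d (q, j))
        = (if 2 ≤ (q:ℕ) ∧ (q:ℕ) < k+1
            then max (x j - (a:ℝ)/k - (((q:ℕ)-1 : ℕ):ℝ)/(k:ℝ)^2 + Δ) 0 else 0)
          + (if k+1 ≤ (q:ℕ) ∧ (q:ℕ) < 2*k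
              then -max (x j - (a:ℝ)/k - (((q:ℕ)-k : ℕ):ℝ)/(k:ℝ)^2) 0 else 0) := by
      intro q
      rw [hv2 q]
      unfold t V2
      split_ifs <;> first | omega | ring1
    rw [Finset.sum_congr rfl (fun q _ => hterm q)]
    rw [Fin.sum_univ_eq_sum_range (fun m =>
      (if 2 ≤ m ∧ m < k+1
          then max (x j - (a:ℝ)/k - ((m-1 : ℕ):ℝ)/(k:ℝ)^2 + Δ) 0 else 0)
        + (if k+1 ≤ m ∧ m < 2*k
            then -max (x j - (a:ℝ)/k - ((m-k : ℕ):ℝ)/(k:ℝ)^2) 0 else 0)) (16*N)]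
    rw [Finset.sum_add_distrib,
      sum_ite_Ico (16*N) 2 (k+1) (by omega) _,
      sum_ite_Ico (16*N) (k+1) (2*k) (by omega) _,
      Finset.sum_Ico_eq_sum_range
        (fun m => max (x j - (a:ℝ)/k - ((m-1 : ℕ):ℝ)/(k:ℝ)^2 + Δ) 0) 2 (k+1),
      Finset.sum_Ico_eq_sum_range
        (fun m => -max (x j - (a:ℝ)/k - ((m-k : ℕ):ℝ)/(k:ℝ)^2) 0) (k+1) (2*k)]
    rw [show k+1-2 = k-1 by omega, show 2*k-(k+1) = k-1 by omega]
    rw [Finset.sum_neg_distrib, ← sub_eq_add_neg, ← Finset.sum_sub_distrib]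
    have hfix : ∀ i ∈ Finset.range (k-1),
        max (x j - (a:ℝ)/k - ((2+i-1 : ℕ):ℝ)/(k:ℝ)^2 + Δ) 0
            - max (x j - (a:ℝ)/k - ((k+1+i-k : ℕ):ℝ)/(k:ℝ)^2) 0
          = max (x j - (a:ℝ)/k - ((1+i : ℕ):ℝ)/(k:ℝ)^2 + Δ) 0
            - max (x j - (a:ℝ)/k - ((1+i : ℕ):ℝ)/(k:ℝ)^2) 0 := by
      intro i _
      rw [show 2+i-1 = 1+i by omega, show k+1+i-k = 1+i by omega]
    rw [Finset.sum_congr rfl hfix]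
    exact stepSum (k-1) bf Δ (x j - (a:ℝ)/k) (fun i => ((1+i:ℕ):ℝ)/(k:ℝ)^2)
      hΔpos h1f h2f (by omega)
  -- third layer
  have hpre3 : A2.apply (reluVec (A1.apply (reluVec (A0.apply x)))) (e N d (⟨0,h16⟩, j))
      = (l j:ℝ)/K := by
    rw [hA2, mkMid_apply]
    simp only [sum_w2 (16*N) k Δ h16']
    rw [hv2 ⟨1, h16'⟩, hT]
    have hV21 : V2 k Δ (x j) ((a:ℝ)/k) ((⟨1,h16'⟩ : Fin (16*N)):ℕ) = (a:ℝ)/k := by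
      show V2 k Δ (x j) ((a:ℝ)/k) 1 = _
      unfold V2; rw [if_neg (by omega), if_pos rfl]
      exact max_eq_left (by positivity)
    rw [hV21, ← hcsum]
    have hmagic2 : 1/((k:ℝ)^2*Δ)*(Δ*(bf:ℝ)) = (bf:ℝ)/(k:ℝ)^2 := hmagic _ _
    split_ifs with h
    · rw [hmagic2]; ring1
    · simp at h
  show A3.apply (reluVec (A2.apply (reluVec (A1.apply (reluVec (A0.apply x)))))) j
      = (l j:ℝ)/K
  rw [hA3, mkOut_apply N d h16]
  show max (A2.apply (reluVec (A1.apply (reluVec (A0.apply x)))) (e N d (⟨0,h16⟩, j))) 0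
      = (l j:ℝ)/K
  rw [hpre3]
  exact max_eq_left (by positivity)
end
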